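/- arXiv:1402.1272 — 4 statements merged into one kernel-verified Lean document; each statement's English description precedes it below -/
import Mathlib

section
/- Let Λ = {λ_n} be an increasing sequence of positive reals with λ_1 > 1, λ_n → ∞, and ∑ 1/λ_n = ∞. If liminf_{n→∞} λ_{2n}/λ_n = q > 1, then every function of bounded Λ#-variation on [0,1)² is continuous in Λ#-variation, i.e. Λ#V = CΛ#V. -/
open MeasureTheory Filter Set ENNReal

noncomputable section

/-- The basic Rademacher-type function: 1 on [0,1/2), -1 on [1/2,1), 1-periodic. -/
def r0 (x : ℝ) : ℝ := if Int.fract x < 1/2 then 1 else -1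

/-- The Walsh functions: products of Rademacher functions according to binary digits. -/
def walsh (k : ℕ) (x : ℝ) : ℝ :=
  ∏ j ∈ Finset.range k, if k.testBit j then r0 (2 ^ j * x) else 1

/-- The Walsh–Dirichlet kernel `D_n`. -/
def walshDirichlet (n : ℕ) (x : ℝ) : ℝ :=
  ∑ k ∈ Finset.range n, walsh k x

/-- A finite ordered family of nonoverlapping subintervals of `[0,1)`. -/
structure IntervalPack (n : ℕ) where
  a : Fin n → ℝ
  b : Fin n → ℝ
  ha : ∀ i, 0 ≤ a i
  hab : ∀ i, a i < b i
  hb : ∀ i, b i ≤ 1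
  disj : ∀ i j, i ≠ j → Disjoint (Ioo (a i) (b i)) (Ioo (a j) (b j))

/-- A family of nonoverlapping intervals together with a point `y i` for each interval. -/
structure SharpPack (n : ℕ) extends IntervalPack n where
  y : Fin n → ℝ
  hy : ∀ i, y i ∈ Ico (0:ℝ) 1

/-- The `Λ^#`-variation sum of `f` over a pack, with weight sequence shifted by `m`
(weight `Λ (m+i)` for the `i`-th interval, `1`-based). -/
def sharpSum {n : ℕ} (Λ : ℕ → ℝ) (m : ℕ) (f : ℝ → ℝ → ℝ) (P : SharpPack n) : ℝ≥0∞ :=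
  ∑ i : Fin n, ENNReal.ofReal
    (|f (P.b i) (P.y i) - f (P.a i) (P.y i)| / Λ (m + i.1 + 1))

/-- `Λ_m^# V_1 (f)`. -/
def sharpV1 (Λ : ℕ → ℝ) (m : ℕ) (f : ℝ → ℝ → ℝ) : ℝ≥0∞ :=
  ⨆ (n : ℕ) (P : SharpPack n), sharpSum Λ m f P

/-- `Λ_m^# V_2 (f)`. -/
def sharpV2 (Λ : ℕ → ℝ) (m : ℕ) (f : ℝ → ℝ → ℝ) : ℝ≥0∞ :=
  sharpV1 Λ m (fun x y => f y x)

/-- `Λ_m^# V (f) = Λ_m^# V_1 (f) + Λ_m^# V_2 (f)`. -/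
def sharpV (Λ : ℕ → ℝ) (m : ℕ) (f : ℝ → ℝ → ℝ) : ℝ≥0∞ :=
  sharpV1 Λ m f + sharpV2 Λ m f

/-- `f ∈ Λ^# BV`: bounded `Λ^#`-variation. -/
def SharpBV (Λ : ℕ → ℝ) (f : ℝ → ℝ → ℝ) : Prop := sharpV Λ 0 f ≠ ⊤

/-- `f ∈ C Λ^# V`: continuity in `Λ^#`-variation, i.e. `Λ_m^# V (f) → 0`. -/
def CSharpV (Λ : ℕ → ℝ) (f : ℝ → ℝ → ℝ) : Prop :=
  Tendsto (fun m => sharpV Λ m f) atTop (nhds 0)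

/-- `v_1^#(n, f)`: supremum of sums of `n` increments over `n` nonoverlapping
intervals, with freely chosen points `y_i`. -/
def vSharp1 (f : ℝ → ℝ → ℝ) (n : ℕ) : ℝ≥0∞ :=
  ⨆ (P : SharpPack n), ∑ i : Fin n,
    ENNReal.ofReal |f (P.b i) (P.y i) - f (P.a i) (P.y i)|

def vSharp2 (f : ℝ → ℝ → ℝ) (n : ℕ) : ℝ≥0∞ := vSharp1 (fun x y => f y x) n

/-- `Λ V_1 (f)`: one fixed `y` for the whole family of intervals. -/
def lineV1 (Λ : ℕ → ℝ) (f : ℝ → ℝ → ℝ) : ℝ≥0∞ :=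
  ⨆ (n : ℕ) (y : Ico (0:ℝ) 1) (P : IntervalPack n),
    ∑ i : Fin n, ENNReal.ofReal (|f (P.b i) (y : ℝ) - f (P.a i) (y : ℝ)| / Λ (i.1 + 1))

def lineV2 (Λ : ℕ → ℝ) (f : ℝ → ℝ → ℝ) : ℝ≥0∞ := lineV1 Λ (fun x y => f y x)

/-- The mixed `(Λ¹,Λ²)`-variation `(Λ¹Λ²) V_{1,2}(f)`. -/
def mixedV (Λ₁ Λ₂ : ℕ → ℝ) (f : ℝ → ℝ → ℝ) : ℝ≥0∞ :=
  ⨆ (n : ℕ) (m : ℕ) (P : IntervalPack n) (Q : IntervalPack m),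
    ∑ i : Fin n, ∑ j : Fin m, ENNReal.ofReal
      (|f (P.a i) (Q.a j) - f (P.a i) (Q.b j) - f (P.b i) (Q.a j) + f (P.b i) (Q.b j)| /
        (Λ₁ (i.1 + 1) * Λ₂ (j.1 + 1)))

/-- Harmonic bounded variation `HBV` in the sense of Hardy–Krause/Waterman type. -/
def HBV (f : ℝ → ℝ → ℝ) : Prop :=
  lineV1 (fun n => (n : ℝ)) f + lineV2 (fun n => (n : ℝ)) f +
    mixedV (fun n => (n : ℝ)) (fun n => (n : ℝ)) f ≠ ⊤

/-- A finite family of nonoverlapping rectangles in `[0,1)²`. -/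
structure RectPack (n : ℕ) where
  a : Fin n → ℝ
  b : Fin n → ℝ
  c : Fin n → ℝ
  d : Fin n → ℝ
  ha : ∀ i, 0 ≤ a i
  hab : ∀ i, a i < b i
  hb : ∀ i, b i ≤ 1
  hc : ∀ i, 0 ≤ c i
  hcd : ∀ i, c i < d i
  hd : ∀ i, d i ≤ 1
  disj : ∀ i j, i ≠ j →
    Disjoint (Ioo (a i) (b i) ×ˢ Ioo (c i) (d i)) (Ioo (a j) (b j) ×ˢ Ioo (c j) (d j))

/-- The Dyachenko–Waterman rectangular variation `Λ* V (f)`. -/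
def rectV (Λ : ℕ → ℝ) (f : ℝ → ℝ → ℝ) : ℝ≥0∞ :=
  ⨆ (n : ℕ) (R : RectPack n), ∑ i : Fin n, ENNReal.ofReal
    (|f (R.a i) (R.c i) - f (R.a i) (R.d i) - f (R.b i) (R.c i) + f (R.b i) (R.d i)| /
      Λ (i.1 + 1))

/-- `q_N = 4^0 + 4^1 + ⋯ + 4^{N-1}`. -/
def qIdx (N : ℕ) : ℕ := ∑ k ∈ Finset.range N, 4 ^ k

/-- The tent function `φ_{N,j}` of height 1 on `[j 2^{-2N}, (j+1) 2^{-2N}]`. -/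
def tent (N j : ℕ) (x : ℝ) : ℝ :=
  max 0 (1 - |2 ^ (2 * N + 1) * x - (2 * j + 1)|)

/-- `φ_N = ∑_{j=1}^{2^{2N}-1} φ_{N,j}`. -/
def tentSum (N : ℕ) (x : ℝ) : ℝ :=
  ∑ j ∈ Finset.Icc 1 (2 ^ (2 * N) - 1), tent N j x

/-- `A_n^α = (α+1)(α+2)⋯(α+n)/n!`. -/
def Acoef (α : ℝ) (n : ℕ) : ℝ :=
  (∏ k ∈ Finset.range n, (α + k + 1)) / n.factorial

/-- The Cesàro `(C,α)` kernel for the Walsh system. -/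
def cesaroKernel (α : ℝ) (n : ℕ) (x : ℝ) : ℝ :=
  (Acoef α (n - 1))⁻¹ * ∑ k ∈ Finset.Icc 1 n, Acoef (α - 1) (n - k) * walshDirichlet k x

/-- The `(n,m)`-th Walsh–Fourier coefficient of `f`. -/
def fourierCoef (f : ℝ → ℝ → ℝ) (n m : ℕ) : ℝ :=
  ∫ x in (0:ℝ)..1, ∫ y in (0:ℝ)..1, f x y * walsh n x * walsh m y

/-- The rectangular partial sums of the double Walsh–Fourier series of `f`. -/
def partialSum (f : ℝ → ℝ → ℝ) (M N : ℕ) (x y : ℝ) : ℝ :=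
  ∑ m ∈ Finset.range M, ∑ n ∈ Finset.range N, fourierCoef f m n * walsh m x * walsh n y

/-- The Cesàro `(C;α,β)` means of the double Walsh–Fourier series of `f`. -/
def cesaroMean (α β : ℝ) (n m : ℕ) (f : ℝ → ℝ → ℝ) (x y : ℝ) : ℝ :=
  (Acoef α (n - 1) * Acoef β (m - 1))⁻¹ *
    ∑ i ∈ Finset.Icc 1 n, ∑ j ∈ Finset.Icc 1 m,
      Acoef (α - 1) (n - i) * Acoef (β - 1) (m - j) * partialSum f i j x y

/-- The sup norm of `f` over `[0,1]²` (in `ℝ≥0∞`). -/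
def supNorm (f : ℝ → ℝ → ℝ) : ℝ≥0∞ :=
  ⨆ (x : Icc (0:ℝ) 1) (y : Icc (0:ℝ) 1), ENNReal.ofReal |f x y|

/-- The norm `‖f‖_C + Λ^# V (f)` on `C ∩ Λ^# BV` (in `ℝ≥0∞`). -/
def bvNorm (Λ : ℕ → ℝ) (f : ℝ → ℝ → ℝ) : ℝ≥0∞ :=
  supNorm f + sharpV Λ 0 f

end
section GVAux

open Set

variable (Λ : ℕ → ℝ) (f : ℝ → ℝ → ℝ)

/-- Monotonicity/positivity bundle for the weight sequence. -/
structure GVHyp (Λ : ℕ → ℝ) : Prop where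
  h1 : 1 < Λ 1
  mono : ∀ n, 1 ≤ n → Λ n ≤ Λ (n + 1)

namespace GVHyp

lemma le_of_le {Λ : ℕ → ℝ} (H : GVHyp Λ) {i j : ℕ} (h1 : 1 ≤ i) (hij : i ≤ j) : Λ i ≤ Λ j := by
  induction j, hij using Nat.le_induction with
  | base => exact le_rfl
  | succ n hn ih => exact le_trans ih (H.mono n (le_trans h1 hn))

lemma one_lt {Λ : ℕ → ℝ} (H : GVHyp Λ) {n : ℕ} (h : 1 ≤ n) : 1 < Λ n := lt_of_lt_of_le H.h1 (H.le_of_le le_rfl h)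

lemma pos {Λ : ℕ → ℝ} (H : GVHyp Λ) {n : ℕ} (h : 1 ≤ n) : 0 < Λ n := lt_trans one_pos (H.one_lt h)

end GVHyp

/-- increment of `f` over a tagged interval `(a, b, y)`. -/
def dv (u : ℝ × ℝ × ℝ) : ℝ := |f u.2.1 u.2.2 - f u.1 u.2.2|

lemma dv_nonneg (u : ℝ × ℝ × ℝ) : 0 ≤ dv f u := abs_nonneg _

/-- admissible tagged interval. -/
def okI (u : ℝ × ℝ × ℝ) : Prop :=
  0 ≤ u.1 ∧ u.1 < u.2.1 ∧ u.2.1 ≤ 1 ∧ u.2.2 ∈ Ico (0:ℝ) 1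

/-- disjointness of the open intervals of two tagged intervals. -/
def IooD (u v : ℝ × ℝ × ℝ) : Prop := Disjoint (Ioo u.1 u.2.1) (Ioo v.1 v.2.1)

lemma IooD.symm' {u v : ℝ × ℝ × ℝ} (h : IooD u v) : IooD v u := Disjoint.symm h

lemma IooD_symmetric : Symmetric IooD := fun _ _ h => h.symm'

/-- a list of tagged intervals forming an admissible nonoverlapping family. -/
def PackOK (xs : List (ℝ × ℝ × ℝ)) : Prop :=
  xs.Pairwise IooD ∧ ∀ u ∈ xs, okI u

/-- the weighted sum of increments, weights `Λ (m+1), Λ (m+2), …`. -/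
noncomputable def rsum : ℕ → List (ℝ × ℝ × ℝ) → ℝ
  | _, [] => 0
  | m, u :: xs => dv f u / Λ (m + 1) + rsum (m + 1) xs

@[simp] lemma rsum_nil (m : ℕ) : rsum Λ f m [] = 0 := rfl

lemma rsum_cons (m : ℕ) (u : ℝ × ℝ × ℝ) (xs : List (ℝ × ℝ × ℝ)) :
    rsum Λ f m (u :: xs) = dv f u / Λ (m + 1) + rsum Λ f (m + 1) xs := rfl

variable {Λ f}

lemma rsum_nonneg (H : GVHyp Λ) (m : ℕ) (xs : List (ℝ × ℝ × ℝ)) : 0 ≤ rsum Λ f m xs := by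
  induction xs generalizing m with
  | nil => simp
  | cons u xs ih =>
    rw [rsum_cons]
    have hp := H.pos (n := m + 1) (by omega)
    exact add_nonneg (div_nonneg (dv_nonneg f u) hp.le) (ih _)

lemma rsum_append (m : ℕ) (xs ys : List (ℝ × ℝ × ℝ)) :
    rsum Λ f m (xs ++ ys) = rsum Λ f m xs + rsum Λ f (m + xs.length) ys := by
  induction xs generalizing m with
  | nil => simp
  | cons u xs ih =>
    simp only [List.cons_append, rsum_cons, ih (m + 1), List.length_cons]
    have harr : m + 1 + xs.length = m + (xs.length + 1) := by omega
    rw [harr]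
    ring

lemma rsum_shift (H : GVHyp Λ) (m : ℕ) (xs : List (ℝ × ℝ × ℝ)) :
    rsum Λ f (m + 1) xs ≤ rsum Λ f m xs := by
  induction xs generalizing m with
  | nil => simp
  | cons u xs ih =>
    rw [rsum_cons, rsum_cons]
    have h1 : 0 < Λ (m + 1) := H.pos (by omega)
    have h2 : Λ (m + 1) ≤ Λ (m + 1 + 1) := H.mono _ (by omega)
    exact add_le_add (div_le_div_of_nonneg_left (dv_nonneg f u) h1 h2) (ih _)

lemma rsum_shift_le (H : GVHyp Λ) {m m' : ℕ} (h : m ≤ m') (xs : List (ℝ × ℝ × ℝ)) :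
    rsum Λ f m' xs ≤ rsum Λ f m xs := by
  induction m', h using Nat.le_induction with
  | base => exact le_rfl
  | succ n hn ih => exact le_trans (rsum_shift H n xs) ih

lemma rsum_le_card (H : GVHyp Λ) {M : ℝ} (hM : 0 ≤ M) (m : ℕ) {xs : List (ℝ × ℝ × ℝ)}
    (hdv : ∀ u ∈ xs, dv f u ≤ M) :
    rsum Λ f m xs ≤ xs.length * (M / Λ (m + 1)) := by
  induction xs generalizing m with
  | nil => simp
  | cons u xs ih =>
    rw [rsum_cons, List.length_cons]
    have h1 : 0 < Λ (m + 1) := H.pos (by omega)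
    have h2 : 0 < Λ (m + 2) := H.pos (by omega)
    have h3 : Λ (m + 1) ≤ Λ (m + 2) := H.mono _ (by omega)
    have hu : dv f u / Λ (m + 1) ≤ M / Λ (m + 1) := by
      gcongr
      exact hdv u (by simp)
    have ht : rsum Λ f (m + 1) xs ≤ xs.length * (M / Λ (m + 2)) :=
      ih (m + 1) (fun v hv => hdv v (by simp [hv]))
    have ht2 : (xs.length : ℝ) * (M / Λ (m + 2)) ≤ xs.length * (M / Λ (m + 1)) := by
      have : M / Λ (m + 2) ≤ M / Λ (m + 1) := div_le_div_of_nonneg_left hM h1 h3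
      exact mul_le_mul_of_nonneg_left this (by positivity)
    push_cast
    nlinarith [le_trans ht ht2]

/-- exchange estimate used in the rearrangement argument. -/
lemma rsum_exchange (H : GVHyp Λ) {D : ℝ} (hD : 0 ≤ D) (m : ℕ) {s : List (ℝ × ℝ × ℝ)}
    (hs : ∀ z ∈ s, dv f z ≤ D) :
    rsum Λ f m s + D / Λ (m + s.length + 1) ≤ D / Λ (m + 1) + rsum Λ f (m + 1) s := by
  induction s generalizing m with
  | nil => simp
  | cons z s ih =>
    rw [rsum_cons, rsum_cons, List.length_cons]
    have h1 : 0 < Λ (m + 1) := H.pos (by omega)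
    have h2 : 0 < Λ (m + 2) := H.pos (by omega)
    have h3 : Λ (m + 1) ≤ Λ (m + 2) := H.mono _ (by omega)
    have hih := ih (m + 1) (fun z hz => hs z (by simp [hz]))
    have hz' : dv f z ≤ D := hs z (by simp)
    have key : dv f z / Λ (m + 1) + D / Λ (m + 2) ≤ D / Λ (m + 1) + dv f z / Λ (m + 2) := by
      have h4 : 0 ≤ D - dv f z := by linarith
      have h5 : (D - dv f z) / Λ (m + 2) ≤ (D - dv f z) / Λ (m + 1) :=
        div_le_div_of_nonneg_left h4 h1 h3
      have e1 : (D - dv f z) / Λ (m + 2) = D / Λ (m + 2) - dv f z / Λ (m + 2) := by ring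
      have e2 : (D - dv f z) / Λ (m + 1) = D / Λ (m + 1) - dv f z / Λ (m + 1) := by ring
      linarith [h5, e1.symm ▸ (e2 ▸ h5)]
    have harr : m + (s.length + 1) + 1 = m + 1 + s.length + 1 := by omega
    rw [harr]
    linarith [hih, key]

/-- rearrangement: a decreasingly sorted version dominates. -/
lemma rsum_le_of_sorted (H : GVHyp Λ) {xs ys : List (ℝ × ℝ × ℝ)} (hperm : xs.Perm ys)
    (hsort : ys.Pairwise (fun u v => dv f v ≤ dv f u)) (m : ℕ) :
    rsum Λ f m xs ≤ rsum Λ f m ys := by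
  induction ys generalizing xs m with
  | nil => simp [List.Perm.eq_nil hperm]
  | cons y ys ih =>
    have hy : y ∈ xs := (hperm.mem_iff).2 (by simp)
    obtain ⟨s, t, rfl⟩ := List.append_of_mem hy
    have hperm2 : (s ++ t).Perm ys := by
      have h1 : (s ++ y :: t).Perm (y :: (s ++ t)) := List.perm_middle
      exact (h1.symm.trans hperm).cons_inv
    have hd : ∀ z ∈ s ++ t, dv f z ≤ dv f y := by
      intro z hz
      have : z ∈ ys := (hperm2.mem_iff).1 hz
      exact (List.pairwise_cons.1 hsort).1 z this
    have hDnn : 0 ≤ dv f y := dv_nonneg f y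
    have step : rsum Λ f m (s ++ y :: t) ≤ rsum Λ f m (y :: (s ++ t)) := by
      rw [rsum_append, rsum_cons, rsum_cons, rsum_append]
      have hex := rsum_exchange (f := f) H hDnn m (s := s) (fun z hz => hd z (by simp [hz]))
      have harr : m + s.length + 1 = m + 1 + s.length := by omega
      rw [harr] at hex ⊢
      linarith [hex]
    refine le_trans step ?_
    rw [rsum_cons, rsum_cons]
    exact add_le_add le_rfl (ih hperm2 (List.pairwise_cons.1 hsort).2 (m + 1))

lemma rsum_ofFn (m : ℕ) : ∀ {n : ℕ} (g : Fin n → ℝ × ℝ × ℝ),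
    rsum Λ f m (List.ofFn g) = ∑ i : Fin n, dv f (g i) / Λ (m + i.1 + 1) := by
  intro n
  induction n generalizing m with
  | zero => intro g; simp
  | succ n ih =>
    intro g
    rw [List.ofFn_succ, rsum_cons, Fin.sum_univ_succ, ih (m + 1) (fun i => g i.succ)]
    simp only [Fin.val_zero, Fin.val_succ]
    congr 1
    refine Finset.sum_congr rfl (fun i _ => ?_)
    congr 2
    omega

/-- build a `SharpPack` from an admissible list. -/
noncomputable def toPack (xs : List (ℝ × ℝ × ℝ)) (h : PackOK xs) : SharpPack xs.length where
  a := fun i => (xs.get i).1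
  b := fun i => (xs.get i).2.1
  y := fun i => (xs.get i).2.2
  ha := fun i => (h.2 _ (xs.get_mem i)).1
  hab := fun i => (h.2 _ (xs.get_mem i)).2.1
  hb := fun i => (h.2 _ (xs.get_mem i)).2.2.1
  hy := fun i => (h.2 _ (xs.get_mem i)).2.2.2
  disj := by
    intro i j hij
    rcases lt_or_gt_of_ne (fun hv => hij (Fin.ext hv) : (i : ℕ) ≠ (j : ℕ)) with h' | h'
    · exact (List.pairwise_iff_getElem.1 h.1) i j i.isLt j.isLt h'
    · exact ((List.pairwise_iff_getElem.1 h.1) j i j.isLt i.isLt h').symm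

lemma sharpSum_toPack (H : GVHyp Λ) (m : ℕ) (xs : List (ℝ × ℝ × ℝ)) (h : PackOK xs) :
    sharpSum Λ m f (toPack xs h) = ENNReal.ofReal (rsum Λ f m xs) := by
  have hof : xs = List.ofFn (fun i : Fin xs.length => xs.get i) := (List.ofFn_get xs).symm
  rw [sharpSum]
  conv_rhs => rw [hof]
  rw [rsum_ofFn]
  rw [ENNReal.ofReal_sum_of_nonneg]
  · rfl
  · intro i _
    have hp : (0:ℝ) < Λ (m + i.1 + 1) := H.pos (by omega)
    exact div_nonneg (dv_nonneg f _) hp.le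

lemma ofReal_rsum_le_sharpV1 (H : GVHyp Λ) (m : ℕ) {xs : List (ℝ × ℝ × ℝ)} (h : PackOK xs) :
    ENNReal.ofReal (rsum Λ f m xs) ≤ sharpV1 Λ m f := by
  rw [← sharpSum_toPack H m xs h]
  exact le_iSup₂ (f := fun n (P : SharpPack n) => sharpSum Λ m f P) xs.length (toPack xs h)

variable (Λ f) in
/-- generalized (constrained) variation sup over list packs. -/
noncomputable def WG (G : ℝ × ℝ × ℝ → Prop) (m : ℕ) : ℝ≥0∞ :=
  ⨆ (xs : List (ℝ × ℝ × ℝ)) (_ : PackOK xs ∧ ∀ u ∈ xs, G u), ENNReal.ofReal (rsum Λ f m xs)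

variable (Λ f) in
noncomputable def LG (G : ℝ × ℝ × ℝ → Prop) : ℝ≥0∞ := ⨅ m, WG Λ f G m

lemma le_WG {G : ℝ × ℝ × ℝ → Prop} {m : ℕ} {xs : List (ℝ × ℝ × ℝ)}
    (h1 : PackOK xs) (h2 : ∀ u ∈ xs, G u) :
    ENNReal.ofReal (rsum Λ f m xs) ≤ WG Λ f G m :=
  le_iSup₂ (f := fun xs (_ : PackOK xs ∧ ∀ u ∈ xs, G u) => ENNReal.ofReal (rsum Λ f m xs))
    xs ⟨h1, h2⟩

lemma WG_le_sharpV1 (H : GVHyp Λ) (G : ℝ × ℝ × ℝ → Prop) (m : ℕ) :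
    WG Λ f G m ≤ sharpV1 Λ m f := by
  refine iSup₂_le fun xs h => ofReal_rsum_le_sharpV1 H m h.1

lemma WG_mono_G {G G' : ℝ × ℝ × ℝ → Prop} (h : ∀ u, G u → G' u) (m : ℕ) :
    WG Λ f G m ≤ WG Λ f G' m := by
  refine iSup₂_le fun xs hx => le_WG hx.1 (fun u hu => h u (hx.2 u hu))

lemma WG_congr {G G' : ℝ × ℝ × ℝ → Prop} (h : ∀ u, G u ↔ G' u) (m : ℕ) :
    WG Λ f G m = WG Λ f G' m :=
  le_antisymm (WG_mono_G (fun u => (h u).1) m) (WG_mono_G (fun u => (h u).2) m)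

lemma LG_congr {G G' : ℝ × ℝ × ℝ → Prop} (h : ∀ u, G u ↔ G' u) :
    LG Λ f G = LG Λ f G' := by
  unfold LG; exact iInf_congr (fun m => WG_congr h m)

lemma WG_anti (H : GVHyp Λ) (G : ℝ × ℝ × ℝ → Prop) : Antitone (WG Λ f G) := by
  intro m m' hmm'
  refine iSup₂_le fun xs hx => ?_
  refine le_trans (ENNReal.ofReal_le_ofReal (rsum_shift_le H hmm' xs)) (le_WG hx.1 hx.2)

lemma LG_le_WG (G : ℝ × ℝ × ℝ → Prop) (m : ℕ) : LG Λ f G ≤ WG Λ f G m := iInf_le _ m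

lemma sharpV1_anti (H : GVHyp Λ) : Antitone (fun m => sharpV1 Λ m f) := by
  intro m m' hmm'
  refine iSup₂_le fun n P => ?_
  refine le_trans ?_ (le_iSup₂ (f := fun n (P : SharpPack n) => sharpSum Λ m f P) n P)
  refine Finset.sum_le_sum fun i _ => ?_
  refine ENNReal.ofReal_le_ofReal ?_
  have h1 : 0 < Λ (m + i.1 + 1) := H.pos (by omega)
  have h2 : Λ (m + i.1 + 1) ≤ Λ (m' + i.1 + 1) := H.le_of_le (by omega) (by omega)
  exact div_le_div_of_nonneg_left (abs_nonneg _) h1 h2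

lemma sharpV1_le_WG (H : GVHyp Λ) {G : ℝ × ℝ × ℝ → Prop} (hG : ∀ u, okI u → G u) (m : ℕ) :
    sharpV1 Λ m f ≤ WG Λ f G m := by
  refine iSup₂_le fun n P => ?_
  set xs := List.ofFn (fun i => (P.a i, P.b i, P.y i)) with hxs
  have hok : ∀ u ∈ xs, okI u := by
    intro u hu
    rw [hxs, List.mem_ofFn] at hu
    obtain ⟨i, rfl⟩ := hu
    exact ⟨P.ha i, P.hab i, P.hb i, P.hy i⟩
  have hpw : xs.Pairwise IooD := by
    rw [hxs, List.pairwise_ofFn]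
    intro i j hij
    exact P.disj i j (Fin.ne_of_lt hij)
  have hsum : sharpSum Λ m f P = ENNReal.ofReal (rsum Λ f m xs) := by
    rw [hxs, rsum_ofFn, sharpSum, ENNReal.ofReal_sum_of_nonneg (fun i _ => by
      have hp : (0:ℝ) < Λ (m + i.1 + 1) := H.pos (by omega)
      exact div_nonneg (dv_nonneg f _) hp.le)]
    rfl
  rw [hsum]
  exact le_WG ⟨hpw, hok⟩ (fun u hu => hG u (hok u hu))

/-- the uniform bound on increments. -/
lemma exists_dv_bound (H : GVHyp Λ) (hfin : sharpV1 Λ 0 f ≠ ⊤) :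
    ∃ M : ℝ, 0 ≤ M ∧ ∀ u, okI u → dv f u ≤ M := by
  refine ⟨(sharpV1 Λ 0 f).toReal * Λ 1, by
    have hΛ : (0:ℝ) < Λ 1 := H.pos le_rfl
    positivity, ?_⟩
  intro u hu
  have hpk : PackOK [u] := ⟨List.pairwise_singleton _ _, by simpa using hu⟩
  have h1 : ENNReal.ofReal (rsum Λ f 0 [u]) ≤ sharpV1 Λ 0 f := ofReal_rsum_le_sharpV1 H 0 hpk
  have h2 : rsum Λ f 0 [u] ≤ (sharpV1 Λ 0 f).toReal :=
    (ENNReal.ofReal_le_iff_le_toReal hfin).1 h1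
  have h3 : rsum Λ f 0 [u] = dv f u / Λ 1 := by simp [rsum_cons]
  have hΛ : (0:ℝ) < Λ 1 := H.pos le_rfl
  rw [h3] at h2
  calc dv f u = dv f u / Λ 1 * Λ 1 := by field_simp
  _ ≤ (sharpV1 Λ 0 f).toReal * Λ 1 := by
      apply mul_le_mul_of_nonneg_right h2 hΛ.le

/-- `u` avoids every interval in the list `F`. -/
def avoidP (F : List (ℝ × ℝ × ℝ)) (u : ℝ × ℝ × ℝ) : Prop := ∀ v ∈ F, IooD u v

/-- `u` is inside the interval of `v`. -/
def insideP (v u : ℝ × ℝ × ℝ) : Prop := v.1 ≤ u.1 ∧ u.2.1 ≤ v.2.1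

lemma insideP.subset {v u : ℝ × ℝ × ℝ} (h : insideP v u) :
    Ioo u.1 u.2.1 ⊆ Ioo v.1 v.2.1 := Set.Ioo_subset_Ioo h.1 h.2

lemma insideP.iooD_left {v u w : ℝ × ℝ × ℝ} (h : insideP v u) (hd : IooD v w) : IooD u w :=
  hd.mono_left h.subset

variable (Λ f) in
noncomputable def massI (v : ℝ × ℝ × ℝ) : ℝ≥0∞ := LG Λ f (insideP v)

variable (Λ f) in
noncomputable def msum (xs : List (ℝ × ℝ × ℝ)) : ℝ≥0∞ := (xs.map (massI Λ f)).sum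

@[simp] lemma msum_nil : msum Λ f [] = 0 := rfl

lemma msum_cons (u : ℝ × ℝ × ℝ) (xs : List (ℝ × ℝ × ℝ)) :
    msum Λ f (u :: xs) = massI Λ f u + msum Λ f xs := by simp [msum]

lemma massI_le_V1 (H : GVHyp Λ) (v : ℝ × ℝ × ℝ) : massI Λ f v ≤ sharpV1 Λ 0 f :=
  le_trans (LG_le_WG _ 0) (WG_le_sharpV1 H _ 0)

lemma LG_le_V1 (H : GVHyp Λ) (G : ℝ × ℝ × ℝ → Prop) : LG Λ f G ≤ sharpV1 Λ 0 f :=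
  le_trans (LG_le_WG _ 0) (WG_le_sharpV1 H _ 0)

/-- stacking packs inside the members of a disjoint family. -/
lemma exists_stacked (H : GVHyp Λ) :
    ∀ (xs : List (ℝ × ℝ × ℝ)), xs.Pairwise IooD → (∀ u ∈ xs, massI Λ f u ≠ ⊤) →
    ∀ (m : ℕ) (ε : ℝ), 0 < ε →
    ∃ zs, PackOK zs ∧ (∀ w ∈ zs, ∃ u ∈ xs, insideP u w) ∧
      msum Λ f xs ≤ ENNReal.ofReal (rsum Λ f m zs) + ENNReal.ofReal ε := by
  intro xs
  induction xs with
  | nil => intro _ _ m ε hε; exact ⟨[], ⟨List.Pairwise.nil, by simp⟩, by simp, by simp⟩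
  | cons u xs ih =>
    intro hpw hfin m ε hε
    have hu_fin : massI Λ f u ≠ ⊤ := hfin u (by simp)
    -- a pack inside u with rsum close to massI u
    have step1 : ∃ zs₁, (PackOK zs₁ ∧ ∀ w ∈ zs₁, insideP u w) ∧
        massI Λ f u ≤ ENNReal.ofReal (rsum Λ f m zs₁) + ENNReal.ofReal (ε / 2) := by
      by_cases hsmall : massI Λ f u ≤ ENNReal.ofReal (ε / 2)
      · exact ⟨[], ⟨⟨List.Pairwise.nil, by simp⟩, by simp⟩, by simpa using hsmall⟩
      · have hne : massI Λ f u ≠ 0 := by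
          intro h0; exact hsmall (by simp [h0])
        have hlt : massI Λ f u - ENNReal.ofReal (ε / 2) < massI Λ f u :=
          ENNReal.sub_lt_self hu_fin hne (by simp [ENNReal.ofReal_pos, half_pos hε])
        have hlt2 : massI Λ f u - ENNReal.ofReal (ε / 2) < WG Λ f (insideP u) m :=
          lt_of_lt_of_le hlt (LG_le_WG _ m)
        rw [WG] at hlt2
        rw [lt_iSup_iff] at hlt2
        obtain ⟨zs₁, hzs₁⟩ := hlt2
        rw [lt_iSup_iff] at hzs₁
        obtain ⟨hzs₁p, hzs₁lt⟩ := hzs₁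
        refine ⟨zs₁, ⟨hzs₁p.1, hzs₁p.2⟩, ?_⟩
        calc massI Λ f u ≤ massI Λ f u - ENNReal.ofReal (ε / 2) + ENNReal.ofReal (ε / 2) :=
              le_tsub_add
          _ ≤ _ := add_le_add_left hzs₁lt.le _
    obtain ⟨zs₁, ⟨hzs₁ok, hzs₁in⟩, hzs₁val⟩ := step1
    obtain ⟨zs₂, hzs₂ok, hzs₂host, hzs₂val⟩ :=
      ih (List.pairwise_cons.1 hpw).2 (fun v hv => hfin v (by simp [hv]))
        (m + zs₁.length) (ε / 2) (half_pos hε)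
    have hcross : ∀ w₁ ∈ zs₁, ∀ w₂ ∈ zs₂, IooD w₁ w₂ := by
      intro w₁ h₁ w₂ h₂
      obtain ⟨u', hu', hin'⟩ := hzs₂host w₂ h₂
      have hdisj : IooD u u' := (List.pairwise_cons.1 hpw).1 u' hu'
      exact ((hzs₁in w₁ h₁).iooD_left hdisj).mono_right hin'.subset
    refine ⟨zs₁ ++ zs₂, ⟨List.pairwise_append.2 ⟨hzs₁ok.1, hzs₂ok.1, hcross⟩, ?_⟩, ?_, ?_⟩
    · intro w hw
      rcases List.mem_append.1 hw with h | h
      · exact hzs₁ok.2 w h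
      · exact hzs₂ok.2 w h
    · intro w hw
      rcases List.mem_append.1 hw with h | h
      · exact ⟨u, by simp, hzs₁in w h⟩
      · obtain ⟨u', hu', hin⟩ := hzs₂host w h
        exact ⟨u', by simp [hu'], hin⟩
    · rw [msum_cons, rsum_append]
      have hnn1 : 0 ≤ rsum Λ f m zs₁ := rsum_nonneg H m zs₁
      have hnn2 : 0 ≤ rsum Λ f (m + zs₁.length) zs₂ := rsum_nonneg H _ zs₂
      rw [ENNReal.ofReal_add hnn1 hnn2]
      calc massI Λ f u + msum Λ f xs
          ≤ (ENNReal.ofReal (rsum Λ f m zs₁) + ENNReal.ofReal (ε / 2)) +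
            (ENNReal.ofReal (rsum Λ f (m + zs₁.length) zs₂) + ENNReal.ofReal (ε / 2)) :=
            add_le_add hzs₁val hzs₂val
        _ = ENNReal.ofReal (rsum Λ f m zs₁) + ENNReal.ofReal (rsum Λ f (m + zs₁.length) zs₂)
            + (ENNReal.ofReal (ε / 2) + ENNReal.ofReal (ε / 2)) := by ring
        _ = _ := by
            congr 1
            rw [← ENNReal.ofReal_add (by linarith) (by linarith)]
            norm_num

/-- superadditivity: total inside-mass of a pack avoiding `F` is at most `LG (avoidP F)`. -/
lemma msum_le_LG (H : GVHyp Λ) (hfin : sharpV1 Λ 0 f ≠ ⊤) {F : List (ℝ × ℝ × ℝ)}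
    {xs : List (ℝ × ℝ × ℝ)} (hok : PackOK xs) (hav : ∀ u ∈ xs, avoidP F u) :
    msum Λ f xs ≤ LG Λ f (avoidP F) := by
  refine ENNReal.le_of_forall_pos_le_add fun ε hε _ => ?_
  have hεr : (0:ℝ) < (ε : ℝ) := hε
  have key : ∀ m, msum Λ f xs ≤ WG Λ f (avoidP F) m + ENNReal.ofReal ε := by
    intro m
    have hfin' : ∀ u ∈ xs, massI Λ f u ≠ ⊤ := fun u _ =>
      (lt_of_le_of_lt (massI_le_V1 H u) (lt_top_iff_ne_top.2 hfin)).ne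
    obtain ⟨zs, hzsok, hhost, hval⟩ := exists_stacked H xs hok.1 hfin' m ε hεr
    refine le_trans hval (add_le_add_left ?_ _)
    refine le_WG hzsok ?_
    intro w hw v hv
    obtain ⟨u, hu, hin⟩ := hhost w hw
    exact (hav u hu v hv).mono_left hin.subset
  rw [← ENNReal.ofReal_coe_nnreal]
  calc msum Λ f xs ≤ ⨅ m, (WG Λ f (avoidP F) m + ENNReal.ofReal ε) := le_iInf key
    _ = LG Λ f (avoidP F) + ENNReal.ofReal ε := by rw [LG, ENNReal.iInf_add]


/-- splitting a weighted sum along two Boolean predicates with few exceptions. -/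
lemma rsum_filter_partition (H : GVHyp Λ) {M : ℝ} (hM : 0 ≤ M) (p q : ℝ × ℝ × ℝ → Bool) :
    ∀ (xs : List (ℝ × ℝ × ℝ)) (m e : ℕ), (∀ u ∈ xs, dv f u ≤ M) →
      (xs.filter (fun u => !p u && !q u)).length ≤ e →
      rsum Λ f m xs ≤ rsum Λ f m (xs.filter p) + rsum Λ f m (xs.filter q) + e * (M / Λ (m + 1)) := by
  intro xs
  induction xs with
  | nil =>
    intro m e _ _
    have : (0:ℝ) ≤ M / Λ (m + 1) := div_nonneg hM (H.pos (by omega)).le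
    simp only [rsum_nil, List.filter_nil, zero_add]
    positivity
  | cons u xs ih =>
    intro m e hdv hbad
    have hΛ1 : (0:ℝ) < Λ (m + 1) := H.pos (by omega)
    have hΛ2 : (0:ℝ) < Λ (m + 2) := H.pos (by omega)
    have hΛ12 : Λ (m + 1) ≤ Λ (m + 2) := H.mono _ (by omega)
    have hjunk : M / Λ (m + 2) ≤ M / Λ (m + 1) := div_le_div_of_nonneg_left hM hΛ1 hΛ12
    have hdv' : ∀ v ∈ xs, dv f v ≤ M := fun v hv => hdv v (by simp [hv])
    -- auxiliary: filtered sums at later shift are dominated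
    have fstep : ∀ (r : ℝ × ℝ × ℝ → Bool),
        rsum Λ f (m + 1) (xs.filter r) ≤ rsum Λ f m ((u :: xs).filter r) := by
      intro r
      rw [List.filter_cons]
      by_cases hr : r u
      · simp only [hr, if_pos]
        rw [rsum_cons]
        have : 0 ≤ dv f u / Λ (m + 1) := div_nonneg (dv_nonneg f u) hΛ1.le
        linarith
      · simp only [hr, if_neg, Bool.false_eq_true, not_false_eq_true]
        exact rsum_shift H m _
    by_cases hp : p u
    · have hb : ((u :: xs).filter (fun u => !p u && !q u)) = xs.filter (fun u => !p u && !q u) := by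
        rw [List.filter_cons]
        simp [hp]
      rw [hb] at hbad
      have hihx := ih (m + 1) e hdv' hbad
      have hfq := fstep q
      have hfiltp : (u :: xs).filter p = u :: xs.filter p := by rw [List.filter_cons]; simp [hp]
      rw [rsum_cons, hfiltp, rsum_cons]
      have hj2 : (e:ℝ) * (M / Λ (m + 2)) ≤ e * (M / Λ (m + 1)) := by
        apply mul_le_mul_of_nonneg_left hjunk (by positivity)
      linarith
    · by_cases hq : q u
      · have hb : ((u :: xs).filter (fun u => !p u && !q u)) = xs.filter (fun u => !p u && !q u) := by
          rw [List.filter_cons]; simp [hq]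
        rw [hb] at hbad
        have hihx := ih (m + 1) e hdv' hbad
        have hfp := fstep p
        have hfiltq : (u :: xs).filter q = u :: xs.filter q := by rw [List.filter_cons]; simp [hq]
        rw [rsum_cons, hfiltq, rsum_cons]
        have hj2 : (e:ℝ) * (M / Λ (m + 2)) ≤ e * (M / Λ (m + 1)) := by
          apply mul_le_mul_of_nonneg_left hjunk (by positivity)
        linarith
      · -- exceptional element
        have hb : ((u :: xs).filter (fun u => !p u && !q u)) =
            u :: xs.filter (fun u => !p u && !q u) := by
          rw [List.filter_cons]; simp [hp, hq]
        rw [hb, List.length_cons] at hbad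
        obtain ⟨e', rfl⟩ : ∃ e', e = e' + 1 := ⟨e - 1, by omega⟩
        have hbad' : (xs.filter (fun u => !p u && !q u)).length ≤ e' := by omega
        have hihx := ih (m + 1) e' hdv' hbad'
        have hfp := fstep p
        have hfq := fstep q
        have hub : dv f u / Λ (m + 1) ≤ M / Λ (m + 1) := by
          gcongr; exact hdv u (by simp)
        have hj2 : (e':ℝ) * (M / Λ (m + 2)) ≤ e' * (M / Λ (m + 1)) := by
          apply mul_le_mul_of_nonneg_left hjunk (by positivity)
        rw [rsum_cons]
        push_cast
        nlinarith [hihx, hfp, hfq, hub, hj2]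

open Classical in
variable (Λ f) in
noncomputable def pOutB (v u : ℝ × ℝ × ℝ) : Bool := decide (IooD u v)

open Classical in
variable (Λ f) in
noncomputable def pInB (v u : ℝ × ℝ × ℝ) : Bool := decide (insideP v u)

lemma pOutB_iff {v u : ℝ × ℝ × ℝ} : pOutB v u = true ↔ IooD u v := by
  simp [pOutB]

lemma pInB_iff {v u : ℝ × ℝ × ℝ} : pInB v u = true ↔ insideP v u := by
  simp [pInB]

/-- at most two members of a disjoint family are neither inside `v` nor away from `v`. -/
lemma bad_length_le_two (v : ℝ × ℝ × ℝ) {xs : List (ℝ × ℝ × ℝ)} (hpw : xs.Pairwise IooD) :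
    (xs.filter (fun u => !pOutB v u && !pInB v u)).length ≤ 2 := by
  set l := xs.filter (fun u => !pOutB v u && !pInB v u) with hl
  have hlpw : l.Pairwise IooD := hpw.sublist (List.filter_sublist (l := xs))
  have htag : ∀ u ∈ l, v.1 ∈ Ioo u.1 u.2.1 ∨ v.2.1 ∈ Ioo u.1 u.2.1 := by
    intro u hu
    have := List.of_mem_filter hu
    simp only [Bool.and_eq_true, Bool.not_eq_true'] at this
    have h1 : ¬ IooD u v := by
      intro h; rw [← pOutB_iff] at h; simp [this.1] at h
    have h2 : ¬ insideP v u := by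
      intro h; rw [← pInB_iff] at h; simp [this.2] at h
    obtain ⟨x, hxu, hxv⟩ := Set.not_disjoint_iff.1 h1
    by_cases hc : u.1 < v.1
    · exact Or.inl ⟨hc, lt_trans hxv.1 hxu.2⟩
    · push_neg at hc
      have hd : v.2.1 < u.2.1 := by
        by_contra hd'
        push_neg at hd'
        exact h2 ⟨hc, hd'⟩
      exact Or.inr ⟨lt_trans hxu.1 hxv.2, hd⟩
  by_contra hlen
  push_neg at hlen
  -- extract three elements
  obtain ⟨a, b, c, rest, hleq⟩ : ∃ a b c rest, l = a :: b :: c :: rest := by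
    match l, hlen with
    | a :: b :: c :: rest, _ => exact ⟨a, b, c, rest, rfl⟩
  rw [hleq] at hlpw htag
  have hab : IooD a b := (List.pairwise_cons.1 hlpw).1 b (by simp)
  have hac : IooD a c := (List.pairwise_cons.1 hlpw).1 c (by simp)
  have hbc : IooD b c :=
    (List.pairwise_cons.1 (List.pairwise_cons.1 hlpw).2).1 c (by simp)
  have hta := htag a (by simp)
  have htb := htag b (by simp)
  have htc := htag c (by simp)
  have key : ∀ (w₁ w₂ : ℝ × ℝ × ℝ) (x : ℝ), IooD w₁ w₂ →
      x ∈ Ioo w₁.1 w₁.2.1 → x ∈ Ioo w₂.1 w₂.2.1 → False := by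
    intro w₁ w₂ x h hx1 hx2
    exact Set.disjoint_left.1 h hx1 hx2
  rcases hta with h1 | h1 <;> rcases htb with h2 | h2 <;> rcases htc with h3 | h3
  · exact key a b _ hab h1 h2
  · exact key a b _ hab h1 h2
  · exact key a c _ hac h1 h3
  · exact key b c _ hbc h2 h3
  · exact key b c _ hbc h2 h3
  · exact key a c _ hac h1 h3
  · exact key a b _ hab h1 h2
  · exact key a b _ hab h1 h2

/-- one-interval cut of the avoiding variation. -/
lemma WG_cut (H : GVHyp Λ) {M : ℝ} (hM : 0 ≤ M) (hMdv : ∀ u, okI u → dv f u ≤ M)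
    (F : List (ℝ × ℝ × ℝ)) (v : ℝ × ℝ × ℝ) (m : ℕ) :
    WG Λ f (avoidP F) m ≤ WG Λ f (avoidP (v :: F)) m + WG Λ f (insideP v) m +
      ENNReal.ofReal (2 * (M / Λ (m + 1))) := by
  refine iSup₂_le fun xs hx => ?_
  obtain ⟨⟨hpw, hok⟩, hav⟩ := hx
  have hpart := rsum_filter_partition H hM (pOutB v) (pInB v) xs m 2
    (fun u hu => hMdv u (hok u hu)) (bad_length_le_two v hpw)
  have hnn1 : 0 ≤ rsum Λ f m (xs.filter (pOutB v)) := rsum_nonneg H m _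
  have hnn2 : 0 ≤ rsum Λ f m (xs.filter (pInB v)) := rsum_nonneg H m _
  have hnn3 : (0:ℝ) ≤ 2 * (M / Λ (m + 1)) := by
    have := (H.pos (n := m + 1) (by omega)).le
    positivity
  calc ENNReal.ofReal (rsum Λ f m xs)
      ≤ ENNReal.ofReal (rsum Λ f m (xs.filter (pOutB v)) + rsum Λ f m (xs.filter (pInB v)) +
          2 * (M / Λ (m + 1))) := ENNReal.ofReal_le_ofReal (by push_cast at hpart ⊢; linarith)
    _ = ENNReal.ofReal (rsum Λ f m (xs.filter (pOutB v))) +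
        ENNReal.ofReal (rsum Λ f m (xs.filter (pInB v))) +
        ENNReal.ofReal (2 * (M / Λ (m + 1))) := by
        rw [ENNReal.ofReal_add (by linarith) hnn3, ENNReal.ofReal_add hnn1 hnn2]
    _ ≤ _ := by
        gcongr
        · refine le_WG ⟨hpw.sublist (List.filter_sublist (l := xs)),
            fun u hu => hok u (List.mem_of_mem_filter hu)⟩ ?_
          intro u hu w hw
          rcases List.mem_cons.1 hw with rfl | hwF
          · exact pOutB_iff.1 (List.of_mem_filter hu)
          · exact hav u (List.mem_of_mem_filter hu) w hwF
        · refine le_WG ⟨hpw.sublist (List.filter_sublist (l := xs)),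
            fun u hu => hok u (List.mem_of_mem_filter hu)⟩ ?_
          intro u hu
          exact pInB_iff.1 (List.of_mem_filter hu)

lemma LG_cut (H : GVHyp Λ) (htop : Filter.Tendsto Λ Filter.atTop Filter.atTop)
    {M : ℝ} (hM : 0 ≤ M) (hMdv : ∀ u, okI u → dv f u ≤ M)
    (hfin : sharpV1 Λ 0 f ≠ ⊤) (F : List (ℝ × ℝ × ℝ)) (v : ℝ × ℝ × ℝ) :
    LG Λ f (avoidP F) ≤ LG Λ f (avoidP (v :: F)) + massI Λ f v := by
  refine ENNReal.le_of_forall_pos_le_add fun ε hε hbfin => ?_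
  have hεr : (0:ℝ) < (ε : ℝ) := hε
  set ε3 : ℝ := (ε : ℝ) / 3 with hε3
  have hε3pos : 0 < ε3 := by positivity
  have hLfin : LG Λ f (avoidP (v :: F)) ≠ ⊤ :=
    (lt_of_le_of_lt le_self_add hbfin).ne
  have hmfin : massI Λ f v ≠ ⊤ := (lt_of_le_of_lt le_add_self hbfin).ne
  -- choose m₁ for the avoiding variation
  have h1 : ∃ m₁, WG Λ f (avoidP (v :: F)) m₁ ≤ LG Λ f (avoidP (v :: F)) + ENNReal.ofReal ε3 := by
    have : LG Λ f (avoidP (v :: F)) < LG Λ f (avoidP (v :: F)) + ENNReal.ofReal ε3 :=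
      ENNReal.lt_add_right hLfin (ne_of_gt (ENNReal.ofReal_pos.2 hε3pos))
    rw [LG, iInf_lt_iff] at this
    obtain ⟨m₁, hm₁⟩ := this
    exact ⟨m₁, hm₁.le⟩
  have h2 : ∃ m₂, WG Λ f (insideP v) m₂ ≤ massI Λ f v + ENNReal.ofReal ε3 := by
    have : massI Λ f v < massI Λ f v + ENNReal.ofReal ε3 :=
      ENNReal.lt_add_right hmfin (ne_of_gt (ENNReal.ofReal_pos.2 hε3pos))
    rw [massI, LG, iInf_lt_iff] at this
    obtain ⟨m₂, hm₂⟩ := this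
    exact ⟨m₂, hm₂.le⟩
  obtain ⟨m₁, hm₁⟩ := h1
  obtain ⟨m₂, hm₂⟩ := h2
  have h3 : ∃ m₃, ∀ k ≥ m₃, Λ k ≥ (2 * M + 1) / ε3 := by
    have := (Filter.tendsto_atTop.1 htop ((2 * M + 1) / ε3))
    exact Filter.eventually_atTop.1 this
  obtain ⟨m₃, hm₃⟩ := h3
  set m := max (max m₁ m₂) m₃ with hm
  have hjunk : 2 * (M / Λ (m + 1)) ≤ ε3 := by
    have hΛ : Λ (m + 1) ≥ (2 * M + 1) / ε3 := hm₃ (m + 1) (by omega)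
    have hΛpos : (0:ℝ) < Λ (m + 1) := H.pos (by omega)
    rw [ge_iff_le, div_le_iff₀ hε3pos] at hΛ
    have e1 : 2 * (M / Λ (m + 1)) = (2 * M) / Λ (m + 1) := by ring
    rw [e1, div_le_iff₀ hΛpos]
    nlinarith
  calc LG Λ f (avoidP F) ≤ WG Λ f (avoidP F) m := LG_le_WG _ m
    _ ≤ WG Λ f (avoidP (v :: F)) m + WG Λ f (insideP v) m +
        ENNReal.ofReal (2 * (M / Λ (m + 1))) := WG_cut H hM hMdv F v m
    _ ≤ (LG Λ f (avoidP (v :: F)) + ENNReal.ofReal ε3) + (massI Λ f v + ENNReal.ofReal ε3) +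
        ENNReal.ofReal ε3 := by
        refine add_le_add (add_le_add ?_ ?_) (ENNReal.ofReal_le_ofReal hjunk)
        · exact le_trans (WG_anti H _ (le_trans (le_max_left m₁ m₂) (le_max_left _ m₃))) hm₁
        · exact le_trans (WG_anti H _ (le_trans (le_max_right m₁ m₂) (le_max_left _ m₃))) hm₂
    _ = LG Λ f (avoidP (v :: F)) + massI Λ f v +
        (ENNReal.ofReal ε3 + ENNReal.ofReal ε3 + ENNReal.ofReal ε3) := by ring
    _ ≤ LG Λ f (avoidP (v :: F)) + massI Λ f v + ↑ε := by
        gcongr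
        rw [← ENNReal.ofReal_coe_nnreal]
        rw [← ENNReal.ofReal_add hε3pos.le hε3pos.le, ← ENNReal.ofReal_add (by linarith) hε3pos.le]
        apply ENNReal.ofReal_le_ofReal
        rw [hε3]
        linarith

lemma avoidP_middle (ys F : List (ℝ × ℝ × ℝ)) (y : ℝ × ℝ × ℝ) (u : ℝ × ℝ × ℝ) :
    avoidP (ys ++ y :: F) u ↔ avoidP ((y :: ys) ++ F) u := by
  constructor <;> intro h v hv <;> apply h <;>
    [skip; skip] <;>
    · have := (List.perm_middle (a := y) (l₁ := ys) (l₂ := F)).mem_iff (a := v)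
      simp only [List.cons_append] at *
      first
        | exact this.2 (by simpa using hv)
        | exact this.1 (by simpa using hv)

/-- iterated cut along a list of intervals. -/
lemma LG_cut_chain (H : GVHyp Λ) (htop : Filter.Tendsto Λ Filter.atTop Filter.atTop)
    {M : ℝ} (hM : 0 ≤ M) (hMdv : ∀ u, okI u → dv f u ≤ M)
    (hfin : sharpV1 Λ 0 f ≠ ⊤) :
    ∀ (ys F : List (ℝ × ℝ × ℝ)),
      LG Λ f (avoidP F) ≤ LG Λ f (avoidP (ys ++ F)) + msum Λ f ys := by
  intro ys
  induction ys with
  | nil => intro F; simp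
  | cons y ys ih =>
    intro F
    calc LG Λ f (avoidP F) ≤ LG Λ f (avoidP (y :: F)) + massI Λ f y :=
          LG_cut H htop hM hMdv hfin F y
      _ ≤ (LG Λ f (avoidP (ys ++ y :: F)) + msum Λ f ys) + massI Λ f y :=
          add_le_add_left (ih (y :: F)) _
      _ = LG Λ f (avoidP (ys ++ y :: F)) + msum Λ f (y :: ys) := by
          rw [msum_cons]; ring
      _ = _ := by
          rw [LG_congr (avoidP_middle ys F y)]


variable (Λ f) in
/-- block-minimal-mass selection: from each consecutive block of size `B`
pick the element of least inside-mass. -/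
noncomputable def blockPickN (B : ℕ) : ℕ → List (ℝ × ℝ × ℝ) → List (ℝ × ℝ × ℝ)
  | 0, _ => []
  | t + 1, zs =>
    if h : 1 ≤ B ∧ B ≤ zs.length then
      match (zs.take B).argmin (massI Λ f) with
      | some u => u :: blockPickN B t (zs.drop B)
      | none => []
    else []

variable (Λ f) in
/-- comparison sums over block right endpoints. -/
noncomputable def auxSumN (B : ℕ) : ℕ → ℕ → List (ℝ × ℝ × ℝ) → ℝ
  | 0, _, _ => 0
  | t + 1, p, zs =>
    if h : 1 ≤ B ∧ B ≤ zs.length then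
      dv f (zs.get ⟨B - 1, by omega⟩) / Λ (p + B) + auxSumN B t (p + B) (zs.drop B)
    else 0

lemma auxSumN_nonneg (H : GVHyp Λ) (B : ℕ) :
    ∀ (t p : ℕ) (zs : List (ℝ × ℝ × ℝ)), 0 ≤ auxSumN Λ f B t p zs := by
  intro t
  induction t with
  | zero => intro p zs; simp [auxSumN]
  | succ t ih =>
    intro p zs
    rw [auxSumN]
    split
    · next h =>
      have hpos : (0:ℝ) < Λ (p + B) := H.pos (by omega)
      exact add_nonneg (div_nonneg (dv_nonneg f _) hpos.le) (ih _ _)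
    · exact le_rfl

lemma blockPickN_sublist (B : ℕ) :
    ∀ (t : ℕ) (zs : List (ℝ × ℝ × ℝ)), (blockPickN Λ f B t zs).Sublist zs := by
  intro t
  induction t with
  | zero => intro zs; simp [blockPickN]
  | succ t ih =>
    intro zs
    rw [blockPickN]
    split
    · next h =>
      rcases hm : (zs.take B).argmin (massI Λ f) with _ | u
      · simp
      · simp only []
        have hmem : u ∈ zs.take B := List.argmin_mem hm
        have h1 : [u].Sublist (zs.take B) := List.singleton_sublist.2 hmem
        have h2 : (blockPickN Λ f B t (zs.drop B)).Sublist (zs.drop B) := ih _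
        have := h1.append h2
        rw [List.take_append_drop] at this
        simpa using this
    · simp

lemma msum_append (xs ys : List (ℝ × ℝ × ℝ)) :
    msum Λ f (xs ++ ys) = msum Λ f xs + msum Λ f ys := by
  simp [msum]

lemma msum_sublist_le {xs ys : List (ℝ × ℝ × ℝ)} (h : ys.Sublist xs) :
    msum Λ f ys ≤ msum Λ f xs :=
  (h.map (massI Λ f)).sum_le_sum (fun a _ => zero_le)

lemma msum_perm {xs ys : List (ℝ × ℝ × ℝ)} (h : xs.Perm ys) :
    msum Λ f xs = msum Λ f ys := (h.map (massI Λ f)).sum_eq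

/-- sorted tail domination. -/
lemma sorted_drop_le {zs : List (ℝ × ℝ × ℝ)}
    (hpw : zs.Pairwise (fun u v => dv f v ≤ dv f u)) {B : ℕ} (hB : 1 ≤ B)
    (hBlen : B ≤ zs.length) :
    ∀ u ∈ zs.drop B, dv f u ≤ dv f (zs.get ⟨B - 1, by omega⟩) := by
  intro u hu
  obtain ⟨j, hj, rfl⟩ := List.mem_iff_getElem.1 hu
  rw [List.getElem_drop]
  have hlt : B - 1 < B + j := by omega
  have hjlen : B + j < zs.length := by
    have := hj
    rw [List.length_drop] at this
    omega
  exact (List.pairwise_iff_getElem.1 hpw) (B - 1) (B + j) (by omega) hjlen hlt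

/-- (L1): a sorted sum is dominated by block right-endpoint representatives. -/
lemma rsum_le_auxSumN (H : GVHyp Λ) {B : ℕ} (hB : 1 ≤ B) :
    ∀ (t : ℕ) (zs : List (ℝ × ℝ × ℝ)) (p : ℕ) (M : ℝ), 0 ≤ M →
      zs.Pairwise (fun u v => dv f v ≤ dv f u) → (∀ u ∈ zs, dv f u ≤ M) →
      zs.length ≤ (t + 1) * B →
      rsum Λ f p zs ≤ B * (M / Λ (p + 1)) + B * auxSumN Λ f B t p zs := by
  intro t
  induction t with
  | zero =>
    intro zs p M hM hpw hdv hlen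
    simp only [auxSumN, mul_zero, add_zero]
    calc rsum Λ f p zs ≤ zs.length * (M / Λ (p + 1)) := rsum_le_card H hM p hdv
      _ ≤ B * (M / Λ (p + 1)) := by
          have h1 : (0:ℝ) ≤ M / Λ (p + 1) := div_nonneg hM (H.pos (by omega)).le
          have h2 : (zs.length : ℝ) ≤ B := by exact_mod_cast (by omega : zs.length ≤ B)
          exact mul_le_mul_of_nonneg_right h2 h1
  | succ t ih =>
    intro zs p M hM hpw hdv hlen
    rw [auxSumN]
    by_cases hg : 1 ≤ B ∧ B ≤ zs.length
    · rw [dif_pos hg]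
      have hΛ1 : (0:ℝ) < Λ (p + 1) := H.pos (by omega)
      have hΛB : (0:ℝ) < Λ (p + B) := H.pos (by omega)
      have hΛB1 : Λ (p + B) ≤ Λ (p + B + 1) := H.mono _ (by omega)
      have hsplit : rsum Λ f p zs =
          rsum Λ f p (zs.take B) + rsum Λ f (p + B) (zs.drop B) := by
        conv_lhs => rw [← List.take_append_drop B zs]
        rw [rsum_append, List.length_take]
        congr 2
        omega
      have htake : rsum Λ f p (zs.take B) ≤ B * (M / Λ (p + 1)) := by
        calc rsum Λ f p (zs.take B) ≤ (zs.take B).length * (M / Λ (p + 1)) :=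
              rsum_le_card H hM p (fun u hu => hdv u (List.mem_of_mem_take hu))
          _ ≤ B * (M / Λ (p + 1)) := by
              have h1 : (0:ℝ) ≤ M / Λ (p + 1) := by positivity
              have h2 : ((zs.take B).length : ℝ) ≤ B := by
                rw [List.length_take]; exact_mod_cast Nat.min_le_left _ _
              exact mul_le_mul_of_nonneg_right h2 h1
      set M' : ℝ := dv f (zs.get ⟨B - 1, by omega⟩) with hM'
      have hM'nn : 0 ≤ M' := dv_nonneg f _
      have hdrop := ih (zs.drop B) (p + B) M' hM'nn
        (hpw.sublist (List.drop_sublist B zs))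
        (sorted_drop_le hpw hB hg.2)
        (by
          rw [List.length_drop]
          have hx : (t + 1 + 1) * B = (t + 1) * B + B := by ring
          omega)
      have hM'step : (B:ℝ) * (M' / Λ (p + B + 1)) ≤ B * (M' / Λ (p + B)) := by
        have : M' / Λ (p + B + 1) ≤ M' / Λ (p + B) :=
          div_le_div_of_nonneg_left hM'nn hΛB hΛB1
        exact mul_le_mul_of_nonneg_left this (by positivity)
      rw [hsplit]
      calc rsum Λ f p (zs.take B) + rsum Λ f (p + B) (zs.drop B)
          ≤ B * (M / Λ (p + 1)) +
            (B * (M' / Λ (p + B + 1)) + B * auxSumN Λ f B t (p + B) (zs.drop B)) :=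
            add_le_add htake hdrop
        _ ≤ B * (M / Λ (p + 1)) +
            (B * (M' / Λ (p + B)) + B * auxSumN Λ f B t (p + B) (zs.drop B)) := by
            linarith
        _ = B * (M / Λ (p + 1)) +
            B * (M' / Λ (p + B) + auxSumN Λ f B t (p + B) (zs.drop B)) := by ring
    · rw [dif_neg hg]
      have hlen' : zs.length ≤ B := by omega
      simp only [mul_zero, add_zero]
      calc rsum Λ f p zs ≤ zs.length * (M / Λ (p + 1)) := rsum_le_card H hM p hdv
        _ ≤ B * (M / Λ (p + 1)) := by
            have h1 : (0:ℝ) ≤ M / Λ (p + 1) := div_nonneg hM (H.pos (by omega)).le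
            have h2 : (zs.length : ℝ) ≤ B := by exact_mod_cast hlen'
            exact mul_le_mul_of_nonneg_right h2 h1

/-- iterated doubling. -/
lemma doubling_pow (H : GVHyp Λ) {q' : ℝ} (hq' : 0 < q') {n₀ : ℕ} (hn₀ : 1 ≤ n₀)
    (hdb : ∀ n, n₀ ≤ n → q' * Λ n ≤ Λ (2 * n)) (E : ℕ) :
    ∀ n, n₀ ≤ n → q' ^ E * Λ n ≤ Λ (2 ^ E * n) := by
  induction E with
  | zero => intro n hn; simp
  | succ E ih =>
    intro n hn
    have h1 : n₀ ≤ 2 ^ E * n := le_trans hn (Nat.le_mul_of_pos_left n (by positivity))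
    have h2 : q' ^ E * Λ n ≤ Λ (2 ^ E * n) := ih n hn
    calc q' ^ (E + 1) * Λ n = q' * (q' ^ E * Λ n) := by ring
      _ ≤ q' * Λ (2 ^ E * n) := mul_le_mul_of_nonneg_left h2 hq'.le
      _ ≤ Λ (2 * (2 ^ E * n)) := hdb _ h1
      _ = Λ (2 ^ (E + 1) * n) := by ring_nf

/-- (L2): value of the block-picked subfamily at compressed slots. -/
lemma pick_value (H : GVHyp Λ) {q' : ℝ} (hq' : 0 < q') {n₀ : ℕ} (hn₀ : 1 ≤ n₀)
    {E B : ℕ} (hBE : B = 2 ^ E) (hdbE : ∀ n, n₀ ≤ n → q' ^ E * Λ n ≤ Λ (2 ^ E * n)) :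
    ∀ (t : ℕ) (zs : List (ℝ × ℝ × ℝ)) (p R' : ℕ),
      zs.Pairwise (fun u v => dv f v ≤ dv f u) →
      (R' + 1) * B ≤ p + B → n₀ ≤ R' + 1 →
      q' ^ E * auxSumN Λ f B t p zs ≤ rsum Λ f R' (blockPickN Λ f B t zs) := by
  intro t
  induction t with
  | zero => intro zs p R' _ _ _; simp [auxSumN, blockPickN]
  | succ t ih =>
    intro zs p R' hpw hinv hn
    rw [auxSumN, blockPickN]
    by_cases hg : 1 ≤ B ∧ B ≤ zs.length
    · rw [dif_pos hg, dif_pos hg]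
      rcases hm : (zs.take B).argmin (massI Λ f) with _ | u
      · exfalso
        rw [List.argmin_eq_none] at hm
        have : (zs.take B).length = 0 := by rw [hm]; rfl
        rw [List.length_take] at this
        omega
      · simp only []
        rw [rsum_cons, mul_add]
        have hΛR : (0:ℝ) < Λ (R' + 1) := H.pos (by omega)
        have hΛpB : (0:ℝ) < Λ (p + B) := H.pos (by omega)
        -- dv u ≥ dv zs[B-1]
        have hudv : dv f (zs.get ⟨B - 1, by omega⟩) ≤ dv f u := by
          have humem : u ∈ zs.take B := List.argmin_mem hm
          obtain ⟨j, hj, hju⟩ := List.mem_take_iff_getElem.1 humem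
          rcases eq_or_lt_of_le (by omega : j ≤ B - 1) with hcase | hcase
          · subst hcase
            rw [← hju]
            simp [List.get_eq_getElem]
          · have := (List.pairwise_iff_getElem.1 hpw) j (B - 1) (by omega) (by omega) hcase
            rw [← hju]
            simpa [List.get_eq_getElem] using this
        -- weight comparison
        have hw : q' ^ E * Λ (R' + 1) ≤ Λ (p + B) := by
          calc q' ^ E * Λ (R' + 1) ≤ Λ (2 ^ E * (R' + 1)) := hdbE (R' + 1) hn
            _ ≤ Λ (p + B) := by
                refine H.le_of_le ?_ ?_
                · have h2 : 0 < 2 ^ E := pow_pos (by norm_num : (0:ℕ) < 2) E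
                  exact Nat.mul_pos h2 (Nat.succ_pos R')
                · have hx : 2 ^ E * (R' + 1) = (R' + 1) * B := by rw [hBE]; ring
                  omega
        have hqE : (0:ℝ) < q' ^ E := by positivity
        have hhead : q' ^ E * (dv f (zs.get ⟨B - 1, by omega⟩) / Λ (p + B)) ≤
            dv f u / Λ (R' + 1) := by
          have h1 : dv f (zs.get ⟨B - 1, by omega⟩) / Λ (p + B) ≤
              dv f (zs.get ⟨B - 1, by omega⟩) / (q' ^ E * Λ (R' + 1)) :=
            div_le_div_of_nonneg_left (dv_nonneg f _) (by positivity) hw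
          calc q' ^ E * (dv f (zs.get ⟨B - 1, by omega⟩) / Λ (p + B))
              ≤ q' ^ E * (dv f (zs.get ⟨B - 1, by omega⟩) / (q' ^ E * Λ (R' + 1))) :=
                mul_le_mul_of_nonneg_left h1 hqE.le
            _ = dv f (zs.get ⟨B - 1, by omega⟩) / Λ (R' + 1) := by
                field_simp
            _ ≤ dv f u / Λ (R' + 1) := by gcongr
        have htail := ih (zs.drop B) (p + B) (R' + 1)
          (hpw.sublist (List.drop_sublist B zs))
          (by
            have hx : (R' + 1 + 1) * B = (R' + 1) * B + B := by ring
            omega)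
          (by omega)
        exact add_le_add hhead htail
    · rw [dif_neg hg, dif_neg hg]
      simp

/-- (L3): the picked family has small total inside-mass. -/
lemma pick_mass (B : ℕ) :
    ∀ (t : ℕ) (zs : List (ℝ × ℝ × ℝ)),
      (B : ℝ≥0∞) * msum Λ f (blockPickN Λ f B t zs) ≤ msum Λ f zs := by
  intro t
  induction t with
  | zero => intro zs; simp [blockPickN]
  | succ t ih =>
    intro zs
    rw [blockPickN]
    by_cases hg : 1 ≤ B ∧ B ≤ zs.length
    · rw [dif_pos hg]
      rcases hm : (zs.take B).argmin (massI Λ f) with _ | u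
      · simp
      · simp only []
        rw [msum_cons, mul_add]
        have hsplit : msum Λ f zs = msum Λ f (zs.take B) + msum Λ f (zs.drop B) := by
          conv_lhs => rw [← List.take_append_drop B zs]
          exact msum_append _ _
        rw [hsplit]
        refine add_le_add ?_ (ih _)
        -- B * massI u ≤ msum (take B zs)
        have hmin : ∀ w ∈ zs.take B, massI Λ f u ≤ massI Λ f w :=
          fun w hw => List.le_of_mem_argmin hw hm
        have hgen : ∀ (l : List (ℝ × ℝ × ℝ)), (∀ w ∈ l, massI Λ f u ≤ massI Λ f w) →
            (l.length : ℝ≥0∞) * massI Λ f u ≤ msum Λ f l := by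
          intro l
          induction l with
          | nil => simp
          | cons w l ihl =>
            intro hl
            rw [msum_cons, List.length_cons]
            push_cast
            rw [add_mul, one_mul]
            rw [add_comm ((l.length : ℝ≥0∞) * massI Λ f u) (massI Λ f u)]
            exact add_le_add (hl w (by simp)) (ihl (fun w' hw' => hl w' (by simp [hw'])))
        have := hgen (zs.take B) hmin
        rw [List.length_take, Nat.min_eq_left hg.2] at this
        exact this
    · rw [dif_neg hg]
      simp

/-- The harvesting lemma: from persistent variation we extract a selected pack with
definite value at compressed slots and small total inside-mass. -/
lemma harvest (H : GVHyp Λ) (htop : Filter.Tendsto Λ Filter.atTop Filter.atTop)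
    {q' : ℝ} (hq'0 : 0 < q') {n₀ : ℕ} (hn₀ : 1 ≤ n₀) {E B : ℕ} (hBE : B = 2 ^ E)
    (hdbE : ∀ n, n₀ ≤ n → q' ^ E * Λ n ≤ Λ (2 ^ E * n))
    {M : ℝ} (hM : 0 ≤ M) (hMdv : ∀ u, okI u → dv f u ≤ M)
    (hfin : sharpV1 Λ 0 f ≠ ⊤)
    {x : ℝ} (hx : 0 < x) (R : ℕ) (hR : n₀ ≤ R + 1)
    (F : List (ℝ × ℝ × ℝ)) (hLG : ENNReal.ofReal x ≤ LG Λ f (avoidP F)) :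
    ∃ ys, PackOK ys ∧ (∀ u ∈ ys, avoidP F u) ∧
      q' ^ E * (x / (2 * B)) ≤ rsum Λ f R ys ∧
      (B : ℝ≥0∞) * msum Λ f ys ≤ LG Λ f (avoidP F) := by
  have hB1 : 1 ≤ B := by rw [hBE]; exact Nat.one_le_two_pow
  set h : ℕ := R * B with hh
  -- choose the shift m
  obtain ⟨m, hm⟩ : ∃ m, ∀ k ≥ m, Λ k ≥ 6 * ((h:ℝ) + B) * M / x + 1 :=
    Filter.eventually_atTop.1 (Filter.tendsto_atTop.1 htop _)
  have hΛm : Λ (m + 1) ≥ 6 * ((h:ℝ) + B) * M / x + 1 := hm (m + 1) (by omega)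
  have hΛmpos : (0:ℝ) < Λ (m + 1) := H.pos (by omega)
  have hjunk : ((h:ℝ) + B) * (M / Λ (m + 1)) ≤ x / 6 := by
    have h0 : 6 * ((h:ℝ) + B) * M / x ≤ Λ (m + 1) - 1 := by linarith
    rw [div_le_iff₀ hx] at h0
    have e : ((h:ℝ) + B) * (M / Λ (m + 1)) = (((h:ℝ) + B) * M) / Λ (m + 1) := by ring
    rw [e, div_le_iff₀ hΛmpos]
    nlinarith
  -- obtain a near-optimal avoiding pack
  have hlt : ENNReal.ofReal (5 * x / 6) < WG Λ f (avoidP F) m := by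
    refine lt_of_lt_of_le ?_ (le_trans hLG (LG_le_WG _ m))
    exact ENNReal.ofReal_lt_ofReal_iff hx |>.2 (by linarith)
  rw [WG, lt_iSup_iff] at hlt
  obtain ⟨xs, hlt⟩ := hlt
  rw [lt_iSup_iff] at hlt
  obtain ⟨⟨hxsok, hxsav⟩, hxsval⟩ := hlt
  have hxsval' : 5 * x / 6 < rsum Λ f m xs := by
    by_contra hcon
    push_neg at hcon
    exact absurd (ENNReal.ofReal_le_ofReal hcon) (not_le.2 hxsval)
  -- sort the pack
  set le : (ℝ × ℝ × ℝ) → (ℝ × ℝ × ℝ) → Bool := fun u v =>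
    @decide (dv f v ≤ dv f u) (Classical.propDecidable _) with hle
  set sorted := xs.mergeSort le with hsorted
  have hperm : sorted.Perm xs := List.mergeSort_perm xs le
  have hsort : sorted.Pairwise (fun u v => dv f v ≤ dv f u) := by
    have := List.pairwise_mergeSort (le := le)
      (fun a b c hab hbc => by
        simp only [hle, decide_eq_true_eq] at *
        exact le_trans hbc hab)
      (fun a b => by
        simp only [hle, Bool.or_eq_true, decide_eq_true_eq]
        exact le_total (dv f b) (dv f a))
      xs
    refine this.imp ?_
    intro a b hab
    simp only [hle, decide_eq_true_eq] at hab
    exact hab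
  have hsok : PackOK sorted :=
    ⟨((List.Perm.pairwise_iff (fun h => IooD.symm' h)) hperm).2 hxsok.1,
     fun u hu => hxsok.2 u (hperm.mem_iff.1 hu)⟩
  have hsav : ∀ u ∈ sorted, avoidP F u := fun u hu => hxsav u (hperm.mem_iff.1 hu)
  have hsval : 5 * x / 6 < rsum Λ f m sorted :=
    lt_of_lt_of_le hxsval' (rsum_le_of_sorted H hperm.symm hsort m)
  have hsdv : ∀ u ∈ sorted, dv f u ≤ M := fun u hu => hMdv u (hsok.2 u hu)
  -- length is large
  have hhlen : h < sorted.length := by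
    by_contra hcon
    push_neg at hcon
    have h1 : rsum Λ f m sorted ≤ sorted.length * (M / Λ (m + 1)) := rsum_le_card H hM m hsdv
    have h2 : (sorted.length : ℝ) * (M / Λ (m + 1)) ≤ ((h:ℝ) + B) * (M / Λ (m + 1)) := by
      have : (sorted.length : ℝ) ≤ (h:ℝ) + B := by
        have : (sorted.length : ℝ) ≤ (h:ℝ) := by exact_mod_cast hcon
        have hB0 : (0:ℝ) ≤ B := by positivity
        linarith
      exact mul_le_mul_of_nonneg_right this (by positivity)
    linarith
  -- drop the head
  set zs := sorted.drop h with hzs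
  have hzssub : zs.Sublist sorted := List.drop_sublist h sorted
  have hsplit : rsum Λ f m sorted = rsum Λ f m (sorted.take h) + rsum Λ f (m + h) zs := by
    conv_lhs => rw [← List.take_append_drop h sorted]
    rw [rsum_append, List.length_take]
    congr 2
    omega
  have hhead : rsum Λ f m (sorted.take h) ≤ (h:ℝ) * (M / Λ (m + 1)) := by
    calc rsum Λ f m (sorted.take h) ≤ (sorted.take h).length * (M / Λ (m + 1)) :=
          rsum_le_card H hM m (fun u hu => hsdv u (List.mem_of_mem_take hu))
      _ ≤ (h:ℝ) * (M / Λ (m + 1)) := by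
          have h2 : ((sorted.take h).length : ℝ) ≤ h := by
            rw [List.length_take]
            exact_mod_cast Nat.min_le_left _ _
          exact mul_le_mul_of_nonneg_right h2 (by positivity)
  have hheadx : rsum Λ f m (sorted.take h) ≤ x / 6 := by
    refine le_trans hhead (le_trans ?_ hjunk)
    have hB0 : (0:ℝ) ≤ (B:ℝ) := by positivity
    have : (0:ℝ) ≤ M / Λ (m + 1) := by positivity
    nlinarith
  have hzsval : x / 2 ≤ rsum Λ f (m + h) zs := by
    have h5 : 5 * x / 6 - x / 6 ≤ rsum Λ f (m + h) zs := by linarith [hsplit, hheadx, hsval]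
    linarith
  -- apply L1
  set t := zs.length with ht
  have hzspw : zs.Pairwise (fun u v => dv f v ≤ dv f u) := hsort.sublist hzssub
  have hzsdv : ∀ u ∈ zs, dv f u ≤ M := fun u hu => hsdv u (hzssub.mem hu)
  have hL1 := rsum_le_auxSumN H hB1 t zs (m + h) M hM hzspw hzsdv (by
    have h1 : (t + 1) * 1 ≤ (t + 1) * B := Nat.mul_le_mul_left _ hB1
    omega)
  have hΛmh : Λ (m + 1) ≤ Λ (m + h + 1) := H.le_of_le (by omega) (by omega)
  have hauxlb : x / (2 * B) ≤ auxSumN Λ f B t (m + h) zs := by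
    have hBjunk : (B:ℝ) * (M / Λ (m + h + 1)) ≤ x / 6 := by
      have h1 : (M / Λ (m + h + 1)) ≤ M / Λ (m + 1) :=
        div_le_div_of_nonneg_left hM hΛmpos hΛmh
      have h2 : (B:ℝ) * (M / Λ (m + h + 1)) ≤ B * (M / Λ (m + 1)) :=
        mul_le_mul_of_nonneg_left h1 (by positivity)
      have h3 : (B:ℝ) * (M / Λ (m + 1)) ≤ ((h:ℝ) + B) * (M / Λ (m + 1)) := by
        have : (0:ℝ) ≤ M / Λ (m + 1) := by positivity
        have hh0 : (0:ℝ) ≤ (h:ℝ) := by positivity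
        nlinarith
      linarith
    have hBpos : (0:ℝ) < B := by exact_mod_cast hB1
    rw [div_le_iff₀ (by positivity : (0:ℝ) < 2 * B)]
    nlinarith [hL1, hzsval, hBjunk, auxSumN_nonneg (f := f) H B t (m + h) zs]
  -- apply L2
  set ys := blockPickN Λ f B t zs with hys
  have hinv : (R + 1) * B ≤ (m + h) + B := by
    have hx2 : (R + 1) * B = R * B + B := by ring
    omega
  have hL2 := pick_value H hq'0 hn₀ hBE hdbE t zs (m + h) R hzspw hinv hR
  have hyssub : ys.Sublist zs := blockPickN_sublist B t zs
  have hvalue : q' ^ E * (x / (2 * B)) ≤ rsum Λ f R ys := by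
    refine le_trans ?_ hL2
    have : (0:ℝ) < q' ^ E := by positivity
    exact mul_le_mul_of_nonneg_left hauxlb this.le
  refine ⟨ys, ⟨hsok.1.sublist (hyssub.trans hzssub),
    fun u hu => hsok.2 u ((hyssub.trans hzssub).mem hu)⟩,
    fun u hu => hsav u ((hyssub.trans hzssub).mem hu), hvalue, ?_⟩
  calc (B : ℝ≥0∞) * msum Λ f ys ≤ msum Λ f zs := pick_mass B t zs
    _ ≤ msum Λ f sorted := msum_sublist_le hzssub
    _ = msum Λ f xs := msum_perm hperm
    _ ≤ LG Λ f (avoidP F) := msum_le_LG H hfin hxsok hxsav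

lemma avoidP_comm (l₁ l₂ : List (ℝ × ℝ × ℝ)) (u : ℝ × ℝ × ℝ) :
    avoidP (l₁ ++ l₂) u ↔ avoidP (l₂ ++ l₁) u := by
  constructor <;> intro h v hv <;> apply h v <;>
    rw [List.mem_append] at * <;> tauto

/-- THE KEY LEMMA: bounded sharp variation implies vanishing limit of shifted variations. -/
lemma key_lemma (H : GVHyp Λ) (htop : Filter.Tendsto Λ Filter.atTop Filter.atTop)
    {q' : ℝ} (hq'1 : 1 < q') {n₀ : ℕ} (hn₀ : 1 ≤ n₀)
    (hdb : ∀ n, n₀ ≤ n → q' * Λ n ≤ Λ (2 * n))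
    (hfin : sharpV1 Λ 0 f ≠ ⊤) :
    ⨅ m, sharpV1 Λ m f = 0 := by
  by_contra hL0
  have hq'0 : 0 < q' := lt_trans one_pos hq'1
  set Lfull := ⨅ m, sharpV1 Λ m f with hLfull
  set Ce := sharpV1 Λ 0 f with hCe
  have hLle : Lfull ≤ Ce := iInf_le _ 0
  have hLne : Lfull ≠ ⊤ := fun ht => hfin (top_le_iff.1 (ht ▸ hLle))
  set ℓ := Lfull.toReal with hℓ
  have hℓpos : 0 < ℓ := ENNReal.toReal_pos hL0 hLne
  have hofℓ : ENNReal.ofReal ℓ = Lfull := ENNReal.ofReal_toReal hLne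
  set x := ℓ / 2 with hx
  have hxpos : 0 < x := by positivity
  obtain ⟨M, hM, hMdv⟩ := exists_dv_bound H hfin
  set C' := Ce.toReal with hC'
  have hC'0 : 0 ≤ C' := ENNReal.toReal_nonneg
  have hofC : ENNReal.ofReal C' = Ce := ENNReal.ofReal_toReal hfin
  -- choose g with 2^g * ℓ ≥ C'
  obtain ⟨g, hg⟩ : ∃ g : ℕ, C' ≤ 2 ^ g * ℓ := by
    obtain ⟨g, hg⟩ := pow_unbounded_of_one_lt (C' / ℓ) (by norm_num : (1:ℝ) < 2)
    exact ⟨g, by rw [div_lt_iff₀ hℓpos] at hg; linarith⟩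
  -- choose s with q'^(s+1+g) * x / 2^(g+2) > C'
  obtain ⟨s, hs⟩ : ∃ s : ℕ, C' < q' ^ (s + 1 + g) * (x / 2 ^ (g + 2)) := by
    obtain ⟨s, hs⟩ := pow_unbounded_of_one_lt (C' * 2 ^ (g + 2) / x) hq'1
    refine ⟨s, ?_⟩
    rw [div_lt_iff₀ hxpos] at hs
    have h1 : q' ^ s ≤ q' ^ (s + 1 + g) := by
      apply pow_le_pow_right₀ hq'1.le
      omega
    have h2 : (0:ℝ) < 2 ^ (g + 2) := by positivity
    have e : q' ^ (s + 1 + g) * (x / 2 ^ (g + 2)) = (q' ^ (s + 1 + g) * x) / 2 ^ (g + 2) := by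
      ring
    rw [e, lt_div_iff₀ h2]
    nlinarith [mul_le_mul_of_nonneg_right h1 hxpos.le]
  set E := s + 1 + g with hE
  set B := 2 ^ E with hB
  set K := 2 ^ s with hK
  have hBr : ((B:ℕ):ℝ) = 2 ^ E := by rw [hB]; push_cast; ring
  set v := q' ^ E * (x / (2 * (B:ℝ))) with hv
  have hvpos : 0 < v := by
    rw [hv, hBr]
    positivity
  have hdbE : ∀ n, n₀ ≤ n → q' ^ E * Λ n ≤ Λ (2 ^ E * n) := doubling_pow H hq'0 hn₀ hdb E
  have hBne0 : (B : ℝ≥0∞) ≠ 0 := by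
    simp [hB]
  have hBnet : (B : ℝ≥0∞) ≠ ⊤ := ENNReal.natCast_ne_top B
  -- key budget fact : (K:ℝ≥0∞) * Ce ≤ (B:ℝ≥0∞) * ENNReal.ofReal x
  have hbudget : (K : ℝ≥0∞) * Ce ≤ (B : ℝ≥0∞) * ENNReal.ofReal x := by
    have hBsplit : (B:ℕ) = K * 2 ^ (1 + g) := by
      rw [hB, hK, hE, ← pow_add]
      congr 1
      omega
    have hstep : Ce ≤ (2 ^ (1 + g) : ℝ≥0∞) * ENNReal.ofReal x := by
      rw [← hofC]
      have : ((2 ^ (1 + g) : ℕ) : ℝ≥0∞) * ENNReal.ofReal x =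
          ENNReal.ofReal ((2 ^ (1 + g) : ℕ) * x) := by
        rw [← ENNReal.ofReal_natCast, ← ENNReal.ofReal_mul (by positivity)]
      rw [show ((2:ℝ≥0∞) ^ (1 + g)) = ((2 ^ (1 + g) : ℕ) : ℝ≥0∞) by push_cast; ring, this]
      refine ENNReal.ofReal_le_ofReal ?_
      have : ((2 ^ (1 + g) : ℕ) : ℝ) = 2 ^ (1 + g) := by push_cast; ring
      rw [this, hx]
      have h2 : (2:ℝ) ^ (1 + g) * (ℓ / 2) = 2 ^ g * ℓ := by
        rw [pow_add]
        ring
      linarith [hg, h2]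
    calc (K : ℝ≥0∞) * Ce ≤ (K : ℝ≥0∞) * ((2 ^ (1 + g) : ℝ≥0∞) * ENNReal.ofReal x) :=
          mul_le_mul_right hstep _
      _ = (B : ℝ≥0∞) * ENNReal.ofReal x := by
          rw [hBsplit]
          push_cast
          ring
  -- main induction
  have main : ∀ k, k ≤ K → ∃ Acc : List (ℝ × ℝ × ℝ), PackOK Acc ∧
      (k : ℝ) * v ≤ rsum Λ f n₀ Acc ∧
      (B : ℝ≥0∞) * Lfull ≤ (B : ℝ≥0∞) * LG Λ f (avoidP Acc) + (k : ℝ≥0∞) * Ce := by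
    intro k
    induction k with
    | zero =>
      intro _
      refine ⟨[], ⟨List.Pairwise.nil, by simp⟩, by simp, ?_⟩
      simp only [Nat.cast_zero, zero_mul, add_zero]
      refine mul_le_mul_right ?_ _
      refine le_iInf fun m => le_trans (iInf_le _ m) (sharpV1_le_WG H ?_ m)
      intro u _ v hv
      simp at hv
    | succ k ih =>
      intro hk1
      obtain ⟨Acc, hAccok, hAccval, hAccinv⟩ := ih (by omega)
      -- budget: LG (avoidP Acc) ≥ ofReal x
      have hLGx : ENNReal.ofReal x ≤ LG Λ f (avoidP Acc) := by
        by_contra hcon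
        push_neg at hcon
        have hstrict : (B : ℝ≥0∞) * LG Λ f (avoidP Acc) < (B : ℝ≥0∞) * ENNReal.ofReal x :=
          ENNReal.mul_lt_mul_right hBne0 hBnet hcon
        have hkK : (k : ℝ≥0∞) * Ce ≤ (K : ℝ≥0∞) * Ce := by
          refine mul_le_mul_left ?_ _
          exact_mod_cast (by omega : k ≤ K)
        have hchain : (B : ℝ≥0∞) * Lfull < (B : ℝ≥0∞) * Lfull := by
          calc (B : ℝ≥0∞) * Lfull
              ≤ (B : ℝ≥0∞) * LG Λ f (avoidP Acc) + (k : ℝ≥0∞) * Ce := hAccinv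
            _ < (B : ℝ≥0∞) * ENNReal.ofReal x + (k : ℝ≥0∞) * Ce := by
                refine ENNReal.add_lt_add_right ?_ hstrict
                exact ENNReal.mul_ne_top (ENNReal.natCast_ne_top k) hfin
            _ ≤ (B : ℝ≥0∞) * ENNReal.ofReal x + (B : ℝ≥0∞) * ENNReal.ofReal x :=
                add_le_add_right (le_trans hkK hbudget) _
            _ = (B : ℝ≥0∞) * (ENNReal.ofReal x + ENNReal.ofReal x) := by rw [mul_add]
            _ = (B : ℝ≥0∞) * ENNReal.ofReal ℓ := by
                rw [← ENNReal.ofReal_add hxpos.le hxpos.le]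
                congr 2
                rw [hx]; ring
            _ = (B : ℝ≥0∞) * Lfull := by rw [hofℓ]
        exact lt_irrefl _ hchain
      -- harvest
      obtain ⟨ys, hysok, hysav, hysval, hysmass⟩ := harvest H htop hq'0 hn₀ hB hdbE hM hMdv
        hfin hxpos (n₀ + Acc.length) (by omega) Acc hLGx
      refine ⟨Acc ++ ys, ?_, ?_, ?_⟩
      · refine ⟨List.pairwise_append.2 ⟨hAccok.1, hysok.1, ?_⟩, ?_⟩
        · intro a ha u hu
          exact (hysav u hu a ha).symm'
        · intro u hu
          rcases List.mem_append.1 hu with h' | h'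
          · exact hAccok.2 u h'
          · exact hysok.2 u h'
      · rw [rsum_append]
        push_cast
        have := hysval
        rw [← hv] at this
        nlinarith [this, hAccval]
      · -- invariant step
        have hcut : LG Λ f (avoidP Acc) ≤ LG Λ f (avoidP (Acc ++ ys)) + msum Λ f ys := by
          refine le_trans (LG_cut_chain H htop hM hMdv hfin ys Acc) ?_
          rw [LG_congr (avoidP_comm ys Acc)]
        have hmassCe : (B : ℝ≥0∞) * msum Λ f ys ≤ Ce :=
          le_trans hysmass (LG_le_V1 H _)
        calc (B : ℝ≥0∞) * Lfull
            ≤ (B : ℝ≥0∞) * LG Λ f (avoidP Acc) + (k : ℝ≥0∞) * Ce := hAccinv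
          _ ≤ (B : ℝ≥0∞) * (LG Λ f (avoidP (Acc ++ ys)) + msum Λ f ys) + (k : ℝ≥0∞) * Ce :=
              add_le_add_left (mul_le_mul_right hcut _) _
          _ = (B : ℝ≥0∞) * LG Λ f (avoidP (Acc ++ ys)) + (B : ℝ≥0∞) * msum Λ f ys +
              (k : ℝ≥0∞) * Ce := by rw [mul_add]
          _ ≤ (B : ℝ≥0∞) * LG Λ f (avoidP (Acc ++ ys)) + Ce + (k : ℝ≥0∞) * Ce :=
              add_le_add_left (add_le_add_right hmassCe _) _
          _ = (B : ℝ≥0∞) * LG Λ f (avoidP (Acc ++ ys)) + ((k:ℝ≥0∞) + 1) * Ce := by ring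
          _ = _ := by
              push_cast
              ring
  -- conclusion
  obtain ⟨Acc, hAccok, hAccval, _⟩ := main K le_rfl
  have hfinal : ENNReal.ofReal ((K:ℝ) * v) ≤ Ce := by
    refine le_trans (ENNReal.ofReal_le_ofReal hAccval) ?_
    refine le_trans (ofReal_rsum_le_sharpV1 H n₀ hAccok) ?_
    exact sharpV1_anti H (by omega : 0 ≤ n₀)
  have hfinal' : (K:ℝ) * v ≤ C' := (ENNReal.ofReal_le_iff_le_toReal hfin).1 hfinal
  -- but K * v > C'
  have hKv : (K:ℝ) * v = q' ^ E * (x / 2 ^ (g + 2)) := by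
    rw [hv, hK, hBr, hE]
    push_cast
    field_simp
    ring
  rw [hKv] at hfinal'
  rw [hE] at hfinal'
  linarith [hs]

/-- finiteness of the variation from a bounded shifted variation. -/
lemma conv_bound (H : GVHyp Λ) (m : ℕ) (hm : sharpV1 Λ m f ≤ 1) :
    sharpV1 Λ 0 f ≠ ⊤ := by
  have hΛ1 : (0:ℝ) < Λ 1 := H.pos le_rfl
  have hΛm : (0:ℝ) < Λ (m + 1) := H.pos (by omega)
  have hdvb : ∀ u, okI u → dv f u ≤ Λ (m + 1) := by
    intro u hu
    have hpk : PackOK [u] := ⟨List.pairwise_singleton _ _, by simpa using hu⟩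
    have h1 : ENNReal.ofReal (rsum Λ f m [u]) ≤ 1 :=
      le_trans (ofReal_rsum_le_sharpV1 H m hpk) hm
    rw [ENNReal.ofReal_le_one] at h1
    have h2 : rsum Λ f m [u] = dv f u / Λ (m + 1) := by simp [rsum_cons]
    rw [h2, div_le_one hΛm] at h1
    linarith
  have hbound : sharpV1 Λ 0 f ≤ ENNReal.ofReal (m * (Λ (m + 1) / Λ 1)) + 1 := by
    refine le_trans (sharpV1_le_WG H (G := fun _ => True) (fun _ _ => trivial) 0) ?_
    refine iSup₂_le fun xs hx => ?_
    obtain ⟨⟨hpw, hok⟩, -⟩ := hx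
    have hsplit : rsum Λ f 0 xs =
        rsum Λ f 0 (xs.take m) + rsum Λ f (xs.take m).length (xs.drop m) := by
      conv_lhs => rw [← List.take_append_drop m xs]
      rw [rsum_append]
      norm_num
    have htake : rsum Λ f 0 (xs.take m) ≤ m * (Λ (m + 1) / Λ 1) := by
      calc rsum Λ f 0 (xs.take m) ≤ (xs.take m).length * (Λ (m + 1) / Λ 1) := by
            have := rsum_le_card H (M := Λ (m + 1)) hΛm.le 0
              (xs := xs.take m)
              (fun u hu => hdvb u (hok u (List.mem_of_mem_take hu)))
            simpa using this
        _ ≤ m * (Λ (m + 1) / Λ 1) := by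
            have h2 : ((xs.take m).length : ℝ) ≤ m := by
              rw [List.length_take]
              exact_mod_cast Nat.min_le_left _ _
            have h3 : (0:ℝ) ≤ Λ (m + 1) / Λ 1 := by positivity
            exact mul_le_mul_of_nonneg_right h2 h3
    have hdrop : ENNReal.ofReal (rsum Λ f (xs.take m).length (xs.drop m)) ≤ 1 := by
      rcases le_or_gt m xs.length with hcase | hcase
      · have hlen : (xs.take m).length = m := by
          rw [List.length_take]
          omega
        rw [hlen]
        refine le_trans (ofReal_rsum_le_sharpV1 H m
          ⟨hpw.sublist (List.drop_sublist m xs),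
           fun u hu => hok u ((List.drop_sublist m xs).mem hu)⟩) hm
      · have hdropnil : xs.drop m = [] := List.drop_eq_nil_of_le hcase.le
        simp [hdropnil]
    calc ENNReal.ofReal (rsum Λ f 0 xs)
        ≤ ENNReal.ofReal (rsum Λ f 0 (xs.take m)) +
          ENNReal.ofReal (rsum Λ f (xs.take m).length (xs.drop m)) := by
          rw [hsplit, ENNReal.ofReal_add (rsum_nonneg H _ _) (rsum_nonneg H _ _)]
      _ ≤ ENNReal.ofReal (m * (Λ (m + 1) / Λ 1)) + 1 :=
          add_le_add (ENNReal.ofReal_le_ofReal htake) hdrop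
  intro htop'
  rw [htop'] at hbound
  exact (ENNReal.add_ne_top.2 ⟨ENNReal.ofReal_ne_top, one_ne_top⟩) (top_le_iff.1 hbound)

end GVAux

/-- If `Λ` is increasing with `λ₁ > 1`, `λ_n → ∞`, `∑ 1/λ_n = ∞` and
`liminf λ_{2n}/λ_n = q > 1`, then `Λ^# V = C Λ^# V`. -/
theorem stmt0 (Λ : ℕ → ℝ) (q : ℝ)
    (h1 : 1 < Λ 1) (hmono : ∀ n, 1 ≤ n → Λ n ≤ Λ (n + 1))
    (htop : Tendsto Λ atTop atTop)
    (hdiv : ¬ Summable (fun n : ℕ => 1 / Λ (n + 1)))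
    (hliminf : Filter.liminf (fun n : ℕ => Λ (2 * (n + 1)) / Λ (n + 1)) atTop = q)
    (hq : 1 < q) :
    ∀ f : ℝ → ℝ → ℝ, SharpBV Λ f ↔ CSharpV Λ f := by
  intro f
  have H : GVHyp Λ := ⟨h1, hmono⟩
  -- extract the doubling property from the liminf hypothesis
  obtain ⟨q', n₀, hq'1, hn₀, hdb⟩ :
      ∃ (q' : ℝ) (n₀ : ℕ), 1 < q' ∧ 1 ≤ n₀ ∧ ∀ n, n₀ ≤ n → q' * Λ n ≤ Λ (2 * n) := by
    set u : ℕ → ℝ := fun n => Λ (2 * (n + 1)) / Λ (n + 1) with hu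
    have hub : ∀ n, 1 ≤ u n := by
      intro n
      have hp : (0:ℝ) < Λ (n + 1) := H.pos (by omega)
      rw [hu]
      simp only []
      rw [le_div_iff₀ hp, one_mul]
      exact H.le_of_le (by omega) (by omega)
    have h1mem : (1:ℝ) ∈ {a | ∀ᶠ n in atTop, a ≤ u n} :=
      Filter.Eventually.of_forall hub
    set q' : ℝ := (1 + q) / 2 with hq'
    have hq'1 : 1 < q' := by rw [hq']; linarith
    have hq'q : q' < q := by rw [hq']; linarith
    have hsup : q' < sSup {a | ∀ᶠ n in atTop, a ≤ u n} := by
      rw [← Filter.liminf_eq, hliminf]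
      exact hq'q
    obtain ⟨a, ha, hq'a⟩ := exists_lt_of_lt_csSup ⟨1, h1mem⟩ hsup
    obtain ⟨N, hN⟩ := Filter.eventually_atTop.1 ha
    refine ⟨q', N + 1, hq'1, by omega, ?_⟩
    intro k hk
    obtain ⟨n, rfl⟩ : ∃ n, k = n + 1 := ⟨k - 1, by omega⟩
    have hp : (0:ℝ) < Λ (n + 1) := H.pos (by omega)
    have h2 : q' ≤ u n := le_of_lt (lt_of_lt_of_le hq'a (hN n (by omega)))
    rw [hu] at h2
    simp only [] at h2
    rw [le_div_iff₀ hp] at h2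
    linarith
  constructor
  · -- bounded variation implies continuity in variation
    intro hBV
    rw [SharpBV, sharpV] at hBV
    have hfin1 : sharpV1 Λ 0 f ≠ ⊤ := by
      intro h; apply hBV; rw [h, top_add]
    have hfin2 : sharpV1 Λ 0 (fun x y => f y x) ≠ ⊤ := by
      intro h; apply hBV; rw [sharpV2, h, add_top]
    have hz1 := key_lemma (f := f) H htop hq'1 hn₀ hdb hfin1
    have hz2 := key_lemma (f := fun x y => f y x) H htop hq'1 hn₀ hdb hfin2
    have t1 : Tendsto (fun m => sharpV1 Λ m f) atTop (nhds 0) := by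
      rw [← hz1]
      exact tendsto_atTop_iInf (sharpV1_anti H)
    have t2 : Tendsto (fun m => sharpV2 Λ m f) atTop (nhds 0) := by
      have : (fun m => sharpV2 Λ m f) = fun m => sharpV1 Λ m (fun x y => f y x) := rfl
      rw [this, ← hz2]
      exact tendsto_atTop_iInf (sharpV1_anti H)
    have := t1.add t2
    rw [add_zero] at this
    exact this
  · -- continuity in variation implies bounded variation
    intro hC
    obtain ⟨N, hN⟩ := (ENNReal.tendsto_atTop_zero.1 hC) 1 (by norm_num)
    have hsm : sharpV Λ N f ≤ 1 := hN N le_rfl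
    rw [sharpV] at hsm
    have hv1 : sharpV1 Λ N f ≤ 1 := le_trans le_self_add hsm
    have hv2 : sharpV1 Λ N (fun x y => f y x) ≤ 1 := by
      refine le_trans ?_ hsm
      exact le_add_self
    rw [SharpBV, sharpV]
    exact ENNReal.add_ne_top.2 ⟨conv_bound H N hv1, conv_bound H N hv2⟩
end

section
/- If n has binary expansion n = ∑_{j≥0} n_j 2^j with n_j ∈ {0,1}, then D_n(t) = w_n(t) · ∑_{j≥0} n_j w_{2^j}(t) D_{2^j}(t) for all t ∈ [0,1). -/
open MeasureTheory Filter Set ENNReal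

section StmtAux

lemma testBit_pow_add' {k m : ℕ} (hm : m < 2^k) (j : ℕ) :
    (2^k + m).testBit j = ((j == k) || m.testBit j) := by
  rcases lt_trichotomy j k with h | h | h
  · have hd : (2^k + m) / 2^j = m / 2^j + 2^(k-j) := by
      have : (2:ℕ)^k = 2^(k-j) * 2^j := by rw [← pow_add]; congr 1; omega
      rw [Nat.add_comm, this, Nat.add_mul_div_right _ _ (Nat.two_pow_pos j)]
    have he : (2:ℕ)^(k-j) % 2 = 0 := by
      have : k - j = (k - j - 1) + 1 := by omega
      rw [this, pow_succ, Nat.mul_mod_left]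
    simp only [Nat.testBit_eq_decide_div_mod_eq, hd]
    rw [Nat.add_mod, he]
    simp [Nat.ne_of_lt h]
  · subst h
    have : (2^j + m) / 2^j = 1 := by
      rw [Nat.add_comm, Nat.add_div_right _ (Nat.two_pow_pos j),
        Nat.div_eq_of_lt hm]
    simp [Nat.testBit_eq_decide_div_mod_eq, this, Nat.testBit_lt_two_pow hm]
  · have h1 : (2:ℕ)^k + m < 2^j := by
      calc 2^k + m < 2^k + 2^k := by omega
      _ = 2^(k+1) := by ring
      _ ≤ 2^j := Nat.pow_le_pow_right (by norm_num) h
    rw [Nat.testBit_lt_two_pow h1, Nat.testBit_lt_two_pow (by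
      calc m < 2^k := hm
      _ ≤ 2^j := Nat.pow_le_pow_right (by norm_num) h.le)]
    simp [Nat.ne_of_gt h]

lemma r0_mul_self (x : ℝ) : r0 x * r0 x = 1 := by
  unfold r0; split <;> norm_num

lemma r0_eq_one {x : ℝ} (h0 : 0 ≤ x) (h : x < 1/2) : r0 x = 1 := by
  unfold r0
  rw [Int.fract_eq_self.mpr ⟨h0, by linarith⟩, if_pos h]

lemma walsh_mul_self (k : ℕ) (x : ℝ) : walsh k x * walsh k x = 1 := by
  unfold walsh
  rw [← Finset.prod_mul_distrib]
  apply Finset.prod_eq_one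
  intro j _
  split
  · exact r0_mul_self _
  · norm_num

lemma walsh_eq_prod (k N : ℕ) (h : k ≤ N) (x : ℝ) :
    walsh k x = ∏ j ∈ Finset.range N, if k.testBit j then r0 (2 ^ j * x) else 1 := by
  unfold walsh
  apply Finset.prod_subset (Finset.range_subset_range.mpr h)
  intro j _ hj
  simp only [Finset.mem_range, not_lt] at hj
  rw [Nat.testBit_lt_two_pow (hj.trans_lt (Nat.lt_two_pow_self (n := j)))]
  simp

lemma walsh_two_pow (j : ℕ) (x : ℝ) : walsh (2^j) x = r0 (2^j * x) := by
  unfold walsh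
  rw [Finset.prod_eq_single j]
  · rw [if_pos Nat.testBit_two_pow_self]
  · intro b _ hb
    rw [Nat.testBit_two_pow]
    simp [Ne.symm hb]
  · intro h
    exact absurd (Finset.mem_range.mpr (Nat.lt_two_pow_self (n := j))) h

lemma walsh_add (k m : ℕ) (hm : m < 2^k) (x : ℝ) :
    walsh (2^k + m) x = walsh (2^k) x * walsh m x := by
  have h1 : 2^k ≤ 2^k + m := Nat.le_add_right _ _
  have h2 : m ≤ 2^k + m := Nat.le_add_left _ _
  rw [walsh_eq_prod (2^k) (2^k+m) h1, walsh_eq_prod m (2^k+m) h2]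
  unfold walsh
  rw [← Finset.prod_mul_distrib]
  apply Finset.prod_congr rfl
  intro j _
  rw [testBit_pow_add' hm j, Nat.testBit_two_pow]
  rcases eq_or_ne j k with h | h
  · subst h
    simp [Nat.testBit_lt_two_pow hm]
  · simp [h, Ne.symm h]

lemma dirichlet_add (k m : ℕ) (hm : m ≤ 2^k) (x : ℝ) :
    walshDirichlet (2^k + m) x =
      walshDirichlet (2^k) x + walsh (2^k) x * walshDirichlet m x := by
  unfold walshDirichlet
  rw [Finset.sum_range_add, Finset.mul_sum]
  congr 1
  apply Finset.sum_congr rfl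
  intro i hi
  exact walsh_add k i (lt_of_lt_of_le (Finset.mem_range.mp hi) hm) x

lemma dirichlet_two_pow (k : ℕ) (x : ℝ) :
    walshDirichlet (2^k) x = ∏ j ∈ Finset.range k, (1 + r0 (2^j * x)) := by
  induction k with
  | zero => simp [walshDirichlet, walsh]
  | succ k ih =>
    have h : (2:ℕ)^(k+1) = 2^k + 2^k := by ring
    rw [h, dirichlet_add k (2^k) le_rfl, ih, Finset.prod_range_succ, walsh_two_pow]
    ring

lemma small_of_fract (k : ℕ) : ∀ t : ℝ, 0 ≤ t → t < 1 →
    (∀ j < k, Int.fract (2^j * t) < 1/2) → t < 1 / 2^k := by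
  induction k with
  | zero => intro t _ h1 _; simpa using h1
  | succ k ih =>
    intro t h0 h1 h
    have ht2 : t < 1/2 := by
      have h00 := h 0 (Nat.succ_pos k)
      rwa [pow_zero, one_mul, Int.fract_eq_self.mpr ⟨h0, h1⟩] at h00
    have hih := ih (2*t) (by linarith) (by linarith) (by
      intro j hj
      have hh := h (j+1) (by omega)
      have he : (2:ℝ)^(j+1) * t = 2^j * (2*t) := by ring
      rwa [he] at hh)
    calc t = (2*t)/2 := by ring
    _ < (1/2^k)/2 := by linarith
    _ = 1/2^(k+1) := by rw [pow_succ]; ring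

lemma walsh_eq_one_of_small (m k : ℕ) (hm : m < 2^k) {t : ℝ} (h0 : 0 ≤ t)
    (ht : t < 1/2^k) : walsh m t = 1 := by
  unfold walsh
  apply Finset.prod_eq_one
  intro j _
  split_ifs with hb
  · have hjk : j < k := by
      by_contra hc
      push_neg at hc
      rw [Nat.testBit_lt_two_pow (lt_of_lt_of_le hm
        (Nat.pow_le_pow_right (by norm_num) hc))] at hb
      exact absurd hb (by simp)
    apply r0_eq_one (by positivity)
    have hlt : (2:ℝ)^j * t < 2^j * (1/2^k) :=
      mul_lt_mul_of_pos_left ht (by positivity)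
    have hle : (2:ℝ)^j * (1/2^k) ≤ 1/2 := by
      rw [mul_one_div, div_le_div_iff₀ (by positivity) (by norm_num)]
      calc (2:ℝ)^j * 2 = 2^(j+1) := by ring
      _ ≤ 2^k := by
        apply pow_le_pow_right₀ (by norm_num)
        omega
      _ = 1 * 2^k := by ring
    linarith
  · rfl

lemma walsh_mul_dirichlet (m k : ℕ) (hm : m < 2^k) {t : ℝ} (h0 : 0 ≤ t) (h1 : t < 1) :
    walsh m t * walshDirichlet (2^k) t = walshDirichlet (2^k) t := by
  by_cases h : ∀ j < k, Int.fract (2^j * t) < 1/2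
  · rw [walsh_eq_one_of_small m k hm h0 (small_of_fract k t h0 h1 h), one_mul]
  · push_neg at h
    obtain ⟨j, hj, hf⟩ := h
    have hz : walshDirichlet (2^k) t = 0 := by
      rw [dirichlet_two_pow]
      apply Finset.prod_eq_zero (Finset.mem_range.mpr hj)
      unfold r0
      rw [if_neg (not_lt.mpr hf)]
      ring
    rw [hz, mul_zero]

lemma stmt5_aux (n : ℕ) (t : ℝ) (h0 : 0 ≤ t) (h1 : t < 1) :
    ∀ N, n < 2^N → walshDirichlet n t =
      walsh n t * ∑ j ∈ Finset.range N,
        (if n.testBit j then walsh (2 ^ j) t * walshDirichlet (2 ^ j) t else 0) := by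
  induction n using Nat.strong_induction_on with
  | _ n ih =>
    intro N hN
    rcases Nat.eq_zero_or_pos n with rfl | hn
    · simp [walshDirichlet]
    · set k := n.log2 with hk
      have h2k : 2^k ≤ n := Nat.log2_self_le hn.ne'
      have h2k' : n < 2^(k+1) := Nat.lt_log2_self
      set m := n - 2^k with hmdef
      have hnm : n = 2^k + m := by omega
      have hm : m < 2^k := by
        have : (2:ℕ)^(k+1) = 2^k + 2^k := by ring
        omega
      have hkN : k < N := by
        by_contra hc
        push_neg at hc
        have := Nat.pow_le_pow_right (by norm_num : 1 ≤ 2) hc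
        omega
      have hmk : m.testBit k = false := Nat.testBit_lt_two_pow hm
      have hsum : ∑ j ∈ Finset.range N,
            (if n.testBit j then walsh (2 ^ j) t * walshDirichlet (2 ^ j) t else 0)
          = walsh (2^k) t * walshDirichlet (2^k) t +
            ∑ j ∈ Finset.range N,
              (if m.testBit j then walsh (2 ^ j) t * walshDirichlet (2 ^ j) t else 0) := by
        rw [← Finset.add_sum_erase _ _ (Finset.mem_range.mpr hkN),
          ← Finset.add_sum_erase _
            (fun j => if m.testBit j then walsh (2 ^ j) t * walshDirichlet (2 ^ j) t else 0)
            (Finset.mem_range.mpr hkN)]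
        have hnk : n.testBit k = true := by
          rw [hnm, testBit_pow_add' hm k]; simp
        simp only [hnk, hmk, Bool.false_eq_true, if_false, if_true, zero_add]
        congr 1
        apply Finset.sum_congr rfl
        intro j hj
        have hjk : j ≠ k := (Finset.mem_erase.mp hj).1
        rw [hnm, testBit_pow_add' hm j]
        simp [hjk]
      rw [hsum]
      have hIH := ih m (by omega) N (by omega)
      have e1 := walsh_mul_self (2^k) t
      have e2 := walsh_mul_dirichlet m k hm h0 h1
      rw [hnm, dirichlet_add k m hm.le, walsh_add k m hm]
      set a := walsh (2^k) t
      set b := walsh m t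
      set D := walshDirichlet (2^k) t
      set Dm := walshDirichlet m t
      set S := ∑ j ∈ Finset.range N,
        (if m.testBit j then walsh (2 ^ j) t * walshDirichlet (2 ^ j) t else 0)
      linear_combination (-(b * D)) * e1 - e2 + a * hIH

end StmtAux

/-- `D_n(t) = w_n(t) ∑_j n_j w_{2^j}(t) D_{2^j}(t)` where `n = ∑ n_j 2^j`. -/
theorem stmt5 (n : ℕ) (t : ℝ) (ht : t ∈ Ico (0 : ℝ) 1) :
    walshDirichlet n t =
      walsh n t * ∑ j ∈ Finset.range n,
        (if n.testBit j then walsh (2 ^ j) t * walshDirichlet (2 ^ j) t else 0) := by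
  exact stmt5_aux n t ht.1 ht.2 n (Nat.lt_two_pow_self (n := n))
end

section
/- If f : [0,1)² → ℝ satisfies ∑_{n=1}^∞ v_s#(f;n) · log(n+1) / n² < ∞ for s = 1,2, then f has bounded {n / log(n+1)}#-variation. -/
open MeasureTheory Filter Set ENNReal

namespace Stmt8Aux

open Real

/-- increment of `f` over the `i`-th interval of a pack -/
noncomputable def dI {n : ℕ} (f : ℝ → ℝ → ℝ) (P : SharpPack n) (i : Fin n) : ℝ≥0∞ :=
  ENNReal.ofReal |f (P.b i) (P.y i) - f (P.a i) (P.y i)|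

lemma sum_le_vSharp1 (f : ℝ → ℝ → ℝ) {n : ℕ} (P : SharpPack n) :
    ∑ i : Fin n, dI f P i ≤ vSharp1 f n :=
  le_iSup (fun P : SharpPack n => ∑ i : Fin n,
    ENNReal.ofReal |f (P.b i) (P.y i) - f (P.a i) (P.y i)|) P

/-- Splitting the first interval of a pack in half. -/
noncomputable def splitPack {k : ℕ} (P : SharpPack (k + 1)) : SharpPack (k + 2) := by
  set c := (P.a 0 + P.b 0) / 2 with hc
  have hc1 : P.a 0 < c := by have := P.hab 0; rw [hc]; linarith
  have hc2 : c < P.b 0 := by have := P.hab 0; rw [hc]; linarith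
  refine ⟨⟨Fin.cons (P.a 0) (Function.update P.a 0 c), Fin.cons c P.b, ?_, ?_, ?_, ?_⟩,
    Fin.cons (P.y 0) P.y, ?_⟩
  · intro i
    refine Fin.cases ?_ (fun j => ?_) i
    · simpa using P.ha 0
    · simp only [Fin.cons_succ, Function.update_apply]
      split
      · exact le_trans (P.ha 0) hc1.le
      · exact P.ha j
  · intro i
    refine Fin.cases ?_ (fun j => ?_) i
    · simpa using hc1
    · simp only [Fin.cons_succ, Function.update_apply]
      split
      · subst ‹j = 0›; exact hc2
      · exact P.hab j
  · intro i
    refine Fin.cases ?_ (fun j => ?_) i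
    · simpa using le_trans hc2.le (P.hb 0)
    · simpa using P.hb j
  · -- disjointness
    have key : Disjoint (Ioo (P.a 0) c) (Ioo c (P.b 0)) := by
      rw [Set.disjoint_left]
      rintro z ⟨_, h1⟩ ⟨h2, _⟩
      linarith
    have hsub0 : Ioo (P.a 0) c ⊆ Ioo (P.a 0) (P.b 0) := Set.Ioo_subset_Ioo_right hc2.le
    have hsub1 : Ioo c (P.b 0) ⊆ Ioo (P.a 0) (P.b 0) := Set.Ioo_subset_Ioo_left hc1.le
    intro i j hne
    rcases Fin.eq_zero_or_eq_succ i with rfl | ⟨i', rfl⟩ <;>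
      rcases Fin.eq_zero_or_eq_succ j with rfl | ⟨j', rfl⟩
    · exact absurd rfl hne
    · simp only [Fin.cons_zero, Fin.cons_succ, Function.update_apply]
      split
      · subst ‹j' = 0›; exact key
      · exact (P.disj 0 j' (Ne.symm ‹j' ≠ 0›)).mono hsub0 le_rfl
    · simp only [Fin.cons_zero, Fin.cons_succ, Function.update_apply]
      split
      · subst ‹i' = 0›; exact key.symm
      · exact (P.disj i' 0 ‹i' ≠ 0›).mono le_rfl hsub0
    · have hne' : i' ≠ j' := by
        intro h; exact hne (by rw [h])
      simp only [Fin.cons_succ, Function.update_apply]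
      split <;> split
      · subst ‹i' = 0›; subst ‹j' = 0›; exact absurd rfl hne'
      · subst ‹i' = 0›
        exact (P.disj 0 j' (Ne.symm ‹j' ≠ 0›)).mono hsub1 le_rfl
      · subst ‹j' = 0›
        exact (P.disj i' 0 ‹i' ≠ 0›).mono le_rfl hsub1
      · exact P.disj i' j' hne'
  · intro i
    refine Fin.cases ?_ (fun j => ?_) i
    · simpa using P.hy 0
    · simpa using P.hy j

lemma sum_le_split (f : ℝ → ℝ → ℝ) {k : ℕ} (P : SharpPack (k + 1)) :
    ∑ i : Fin (k + 1), dI f P i ≤ ∑ i : Fin (k + 2), dI f (splitPack P) i := by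
  set c := (P.a 0 + P.b 0) / 2 with hc
  have hQa0 : (splitPack P).a 0 = P.a 0 := rfl
  have hQb0 : (splitPack P).b 0 = c := rfl
  have hQy0 : (splitPack P).y 0 = P.y 0 := rfl
  have hQas : ∀ j : Fin (k+1), (splitPack P).a j.succ = Function.update P.a 0 c j := fun j => rfl
  have hQbs : ∀ j : Fin (k+1), (splitPack P).b j.succ = P.b j := fun j => rfl
  have hQys : ∀ j : Fin (k+1), (splitPack P).y j.succ = P.y j := fun j => rfl
  have hRHS : ∑ i : Fin (k + 2), dI f (splitPack P) i
      = dI f (splitPack P) 0 + ∑ j : Fin (k+1), dI f (splitPack P) j.succ := by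
    rw [Fin.sum_univ_succ]
  rw [hRHS]
  have h0mem : (0 : Fin (k+1)) ∈ (Finset.univ : Finset (Fin (k+1))) := Finset.mem_univ _
  rw [← Finset.sum_erase_add Finset.univ (dI f P) h0mem,
      ← Finset.sum_erase_add Finset.univ (fun j : Fin (k+1) => dI f (splitPack P) j.succ) h0mem]
  have heq : ∀ j ∈ Finset.univ.erase (0 : Fin (k+1)),
      dI f P j = dI f (splitPack P) j.succ := by
    intro j hj
    have hj0 : j ≠ 0 := Finset.ne_of_mem_erase hj
    unfold dI
    rw [hQas, hQbs, hQys, Function.update_apply, if_neg hj0]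
  rw [Finset.sum_congr rfl heq]
  have htri : dI f P 0 ≤ dI f (splitPack P) 0 + dI f (splitPack P) (0 : Fin (k+1)).succ := by
    unfold dI
    rw [hQas, hQbs, hQys, hQa0, hQb0, hQy0, Function.update_self]
    refine le_trans (ENNReal.ofReal_le_ofReal (abs_sub_le (f (P.b 0) (P.y 0)) (f c (P.y 0))
      (f (P.a 0) (P.y 0)))) ?_
    refine le_trans ENNReal.ofReal_add_le ?_
    rw [add_comm]
  calc ∑ j ∈ Finset.univ.erase (0:Fin (k+1)), dI f (splitPack P) j.succ + dI f P 0
      ≤ ∑ j ∈ Finset.univ.erase (0:Fin (k+1)), dI f (splitPack P) j.succ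
        + (dI f (splitPack P) 0 + dI f (splitPack P) (0 : Fin (k+1)).succ) :=
        add_le_add_right htri _
    _ = dI f (splitPack P) 0 + (∑ j ∈ Finset.univ.erase (0:Fin (k+1)),
          dI f (splitPack P) j.succ + dI f (splitPack P) (0 : Fin (k+1)).succ) := by ring

lemma vSharp1_mono (f : ℝ → ℝ → ℝ) : Monotone (vSharp1 f) := by
  refine monotone_nat_of_le_succ (fun n => ?_)
  unfold vSharp1
  refine iSup_le (fun P => ?_)
  cases n with
  | zero =>
    simp
  | succ k =>
    refine le_trans (sum_le_split f P) ?_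
    exact le_iSup (fun Q : SharpPack (k+2) => ∑ i : Fin (k+2),
      ENNReal.ofReal |f (Q.b i) (Q.y i) - f (Q.a i) (Q.y i)|) (splitPack P)

/-- restriction of a pack to the first `m` intervals -/
noncomputable def restrictPack {m n : ℕ} (h : m ≤ n) (P : SharpPack n) : SharpPack m :=
  ⟨⟨P.a ∘ Fin.castLE h, P.b ∘ Fin.castLE h, fun i => P.ha _, fun i => P.hab _,
    fun i => P.hb _, fun i j hne => P.disj _ _ (fun hcontra => hne (Fin.castLE_injective h hcontra))⟩,
    P.y ∘ Fin.castLE h, fun i => P.hy _⟩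

lemma prefix_le (f : ℝ → ℝ → ℝ) {n : ℕ} (P : SharpPack n) (m : ℕ) :
    (∑ i : Fin n, if i.1 ≤ m then dI f P i else 0) ≤ vSharp1 f (m + 1) := by
  rcases le_or_gt n (m + 1) with h | h
  · have hall : ∀ i : Fin n, i.1 ≤ m := fun i => Nat.lt_succ_iff.mp (lt_of_lt_of_le i.2 h)
    rw [Finset.sum_congr rfl (fun i _ => if_pos (hall i))]
    exact le_trans (sum_le_vSharp1 f P) (vSharp1_mono f h)
  · have h' : m + 1 ≤ n := h.le
    have hsum : (∑ i : Fin n, if i.1 ≤ m then dI f P i else 0)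
        = ∑ j : Fin (m + 1), dI f (restrictPack h' P) j := by
      rw [← Finset.sum_filter]
      refine Finset.sum_bij' (fun i hi => (⟨i.1, ?_⟩ : Fin (m+1)))
        (fun j _ => Fin.castLE h' j) ?_ ?_ ?_ ?_ ?_
      · exact Nat.lt_succ_of_le (by simpa using (Finset.mem_filter.mp hi).2)
      · intro a ha; exact Finset.mem_univ _
      · intro a ha
        simp only [Finset.mem_filter, Finset.mem_univ, true_and]
        exact Nat.lt_succ_iff.mp a.2
      · intro a ha; rfl
      · intro a ha; rfl
      · intro a ha; rfl
    rw [hsum]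
    exact sum_le_vSharp1 f (restrictPack h' P)

/-- the weight sequence `w m = log(m+2)/(m+1)` -/
noncomputable def wseq (m : ℕ) : ℝ := Real.log ((m : ℝ) + 2) / ((m : ℝ) + 1)

noncomputable def cseq (m : ℕ) : ℝ≥0∞ := ENNReal.ofReal (wseq m - wseq (m + 1))

lemma wseq_tendsto : Tendsto wseq atTop (nhds 0) := by
  have hlog : Tendsto (fun x : ℝ => Real.log x / x) atTop (nhds 0) :=
    Real.isLittleO_log_id_atTop.tendsto_div_nhds_zero
  have hcomp : Tendsto (fun m : ℕ => ((m : ℝ) + 2)) atTop atTop :=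
    tendsto_atTop_add_const_right _ 2 tendsto_natCast_atTop_atTop
  have h2 : Tendsto (fun m : ℕ => Real.log ((m : ℝ) + 2) / ((m : ℝ) + 2)) atTop (nhds 0) :=
    hlog.comp hcomp
  have h3 : Tendsto (fun m : ℕ => 2 * (Real.log ((m : ℝ) + 2) / ((m : ℝ) + 2))) atTop (nhds 0) := by
    simpa using h2.const_mul 2
  refine squeeze_zero (fun m => ?_) (fun m => ?_) h3
  · exact div_nonneg (Real.log_nonneg (by push_cast; linarith)) (by positivity)
  · unfold wseq
    have hln : 0 ≤ Real.log ((m : ℝ) + 2) := Real.log_nonneg (by push_cast; linarith)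
    rw [show (2 : ℝ) * (Real.log ((m : ℝ) + 2) / ((m : ℝ) + 2))
        = 2 * Real.log ((m : ℝ) + 2) / ((m : ℝ) + 2) by ring,
      div_le_div_iff₀ (by positivity) (by positivity)]
    nlinarith [hln, Nat.cast_nonneg (α := ℝ) m]

lemma cseq_le (m : ℕ) :
    cseq m ≤ ENNReal.ofReal (Real.log ((m : ℝ) + 2) / ((m : ℝ) + 1) ^ 2) := by
  refine ENNReal.ofReal_le_ofReal ?_
  unfold wseq
  push_cast
  set x := (m : ℝ) with hx
  have hx0 : 0 ≤ x := Nat.cast_nonneg m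
  have hL2 : 0 ≤ Real.log (x + 2) := Real.log_nonneg (by linarith)
  have hL3 : Real.log (x + 2) ≤ Real.log (x + 1 + 2) := by
    apply Real.log_le_log (by linarith) (by linarith)
  have hkey : Real.log (x + 2) / (x + 1) - Real.log (x + 2) / (x + 2)
      ≤ Real.log (x + 2) / (x + 1) ^ 2 := by
    rw [div_sub_div _ _ (by positivity : (x+1) ≠ 0) (by positivity : (x+2) ≠ 0),
      div_le_div_iff₀ (by positivity) (by positivity)]
    nlinarith [hL2, hx0]
  have hstep : Real.log (x + 2) / (x + 2) ≤ Real.log (x + 1 + 2) / (x + 1 + 1) := by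
    have h22 : (x + 1 + 1 : ℝ) = x + 2 := by ring
    rw [h22]
    gcongr <;> linarith
  linarith [hkey, hstep]

lemma tele_le (i K : ℕ) :
    ENNReal.ofReal (Stmt8Aux.wseq i - Stmt8Aux.wseq (i + K))
      ≤ ∑ k ∈ Finset.range K, Stmt8Aux.cseq (i + k) := by
  induction K with
  | zero => simp
  | succ K ih =>
    rw [Finset.sum_range_succ]
    have hsplit : Stmt8Aux.wseq i - Stmt8Aux.wseq (i + (K + 1))
        = (Stmt8Aux.wseq i - Stmt8Aux.wseq (i + K))
          + (Stmt8Aux.wseq (i + K) - Stmt8Aux.wseq (i + K + 1)) := by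
      have : i + (K + 1) = i + K + 1 := by ring
      rw [this]; ring
    rw [hsplit]
    exact le_trans ENNReal.ofReal_add_le (add_le_add ih le_rfl)

lemma wseq_le_tsum (i : ℕ) :
    ENNReal.ofReal (Stmt8Aux.wseq i)
      ≤ ∑' m : ℕ, if i ≤ m then Stmt8Aux.cseq m else 0 := by
  have htend : Tendsto (fun K : ℕ => ENNReal.ofReal (Stmt8Aux.wseq i - Stmt8Aux.wseq (i + K)))
      atTop (nhds (ENNReal.ofReal (Stmt8Aux.wseq i))) := by
    have h1 : Tendsto (fun K : ℕ => Stmt8Aux.wseq i - Stmt8Aux.wseq (i + K)) atTop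
        (nhds (Stmt8Aux.wseq i)) := by
      have h2 : Tendsto (fun K : ℕ => Stmt8Aux.wseq (i + K)) atTop (nhds 0) := by
        have := Stmt8Aux.wseq_tendsto.comp (tendsto_add_atTop_nat i)
        simpa [Function.comp_def, add_comm] using this
      simpa using (tendsto_const_nhds (x := Stmt8Aux.wseq i)).sub h2
    exact (ENNReal.continuous_ofReal.tendsto _).comp h1
  refine le_of_tendsto' htend (fun K => ?_)
  refine le_trans (tele_le i K) ?_
  have h3 : ∑ k ∈ Finset.range K, Stmt8Aux.cseq (i + k)
      = ∑ m ∈ Finset.Ico i (i + K), (if i ≤ m then Stmt8Aux.cseq m else 0) := by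
    rw [Finset.sum_Ico_eq_sum_range]
    simp only [Nat.add_sub_cancel_left]
    refine Finset.sum_congr rfl (fun k _ => ?_)
    rw [if_pos (Nat.le_add_right i k)]
  rw [h3]
  exact ENNReal.sum_le_tsum _

lemma sharpSum_le (f : ℝ → ℝ → ℝ) {n : ℕ} (P : SharpPack n) :
    sharpSum (fun n => (n : ℝ) / Real.log ((n : ℝ) + 1)) 0 f P
      ≤ ∑' m : ℕ, vSharp1 f (m + 1) *
          ENNReal.ofReal (Real.log ((m : ℝ) + 2) / ((m : ℝ) + 1) ^ 2) := by
  have step1 : sharpSum (fun n => (n : ℝ) / Real.log ((n : ℝ) + 1)) 0 f P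
      = ∑ i : Fin n, Stmt8Aux.dI f P i * ENNReal.ofReal (Stmt8Aux.wseq i.1) := by
    unfold sharpSum
    refine Finset.sum_congr rfl (fun i _ => ?_)
    have hcast : ((0 + i.1 + 1 : ℕ) : ℝ) = (i.1 : ℝ) + 1 := by push_cast; ring
    have harg : |f (P.b i) (P.y i) - f (P.a i) (P.y i)| /
        (((0 + i.1 + 1 : ℕ) : ℝ) / Real.log (((0 + i.1 + 1 : ℕ) : ℝ) + 1))
        = |f (P.b i) (P.y i) - f (P.a i) (P.y i)| * Stmt8Aux.wseq i.1 := by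
      rw [hcast]
      unfold Stmt8Aux.wseq
      rw [div_div_eq_mul_div, mul_div_assoc]
      congr 2
      ring
    rw [harg, ENNReal.ofReal_mul (abs_nonneg _)]
    rfl
  rw [step1]
  have step2 : ∑ i : Fin n, Stmt8Aux.dI f P i * ENNReal.ofReal (Stmt8Aux.wseq i.1)
      ≤ ∑ i : Fin n, ∑' m : ℕ, (if i.1 ≤ m then Stmt8Aux.dI f P i * Stmt8Aux.cseq m else 0) := by
    refine Finset.sum_le_sum (fun i _ => ?_)
    calc Stmt8Aux.dI f P i * ENNReal.ofReal (Stmt8Aux.wseq i.1)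
        ≤ Stmt8Aux.dI f P i * ∑' m : ℕ, (if i.1 ≤ m then Stmt8Aux.cseq m else 0) :=
          mul_le_mul_right (wseq_le_tsum i.1) _
      _ = ∑' m : ℕ, Stmt8Aux.dI f P i * (if i.1 ≤ m then Stmt8Aux.cseq m else 0) :=
          ENNReal.tsum_mul_left.symm
      _ = ∑' m : ℕ, (if i.1 ≤ m then Stmt8Aux.dI f P i * Stmt8Aux.cseq m else 0) := by
          refine tsum_congr (fun m => ?_)
          split <;> simp
  refine le_trans step2 ?_
  have step3 : ∑ i : Fin n, ∑' m : ℕ, (if i.1 ≤ m then Stmt8Aux.dI f P i * Stmt8Aux.cseq m else 0)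
      = ∑' m : ℕ, ∑ i : Fin n, (if i.1 ≤ m then Stmt8Aux.dI f P i * Stmt8Aux.cseq m else 0) :=
    (Summable.tsum_finsetSum (fun i _ => ENNReal.summable)).symm
  rw [step3]
  refine ENNReal.tsum_le_tsum (fun m => ?_)
  have step4 : ∑ i : Fin n, (if i.1 ≤ m then Stmt8Aux.dI f P i * Stmt8Aux.cseq m else 0)
      = (∑ i : Fin n, if i.1 ≤ m then Stmt8Aux.dI f P i else 0) * Stmt8Aux.cseq m := by
    rw [Finset.sum_mul]
    refine Finset.sum_congr rfl (fun i _ => ?_)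
    split <;> simp
  rw [step4]
  calc (∑ i : Fin n, if i.1 ≤ m then Stmt8Aux.dI f P i else 0) * Stmt8Aux.cseq m
      ≤ vSharp1 f (m + 1) * Stmt8Aux.cseq m :=
        mul_le_mul_left (Stmt8Aux.prefix_le f P m) _
    _ ≤ vSharp1 f (m + 1) * ENNReal.ofReal (Real.log ((m : ℝ) + 2) / ((m : ℝ) + 1) ^ 2) :=
        mul_le_mul_right (Stmt8Aux.cseq_le m) _

lemma sharpV1_le (f : ℝ → ℝ → ℝ) :
    sharpV1 (fun n => (n : ℝ) / Real.log ((n : ℝ) + 1)) 0 f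
      ≤ ∑' m : ℕ, vSharp1 f (m + 1) *
          ENNReal.ofReal (Real.log ((m : ℝ) + 2) / ((m : ℝ) + 1) ^ 2) := by
  refine iSup_le (fun n => iSup_le (fun P => ?_))
  exact sharpSum_le f P

end Stmt8Aux

/-- if `∑ v_s^#(f;n) log(n+1)/n² < ∞` for `s = 1,2`, then
`f ∈ {n / log(n+1)}^# BV`. -/
theorem stmt8 (f : ℝ → ℝ → ℝ)
    (h1 : (∑' n : ℕ, vSharp1 f (n + 1) *
      ENNReal.ofReal (Real.log ((n : ℝ) + 2) / ((n : ℝ) + 1) ^ 2)) ≠ ⊤)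
    (h2 : (∑' n : ℕ, vSharp2 f (n + 1) *
      ENNReal.ofReal (Real.log ((n : ℝ) + 2) / ((n : ℝ) + 1) ^ 2)) ≠ ⊤) :
    SharpBV (fun n => (n : ℝ) / Real.log ((n : ℝ) + 1)) f := by
  unfold SharpBV sharpV
  refine ENNReal.add_ne_top.mpr ⟨?_, ?_⟩
  · exact ne_top_of_le_ne_top h1 (Stmt8Aux.sharpV1_le f)
  · exact ne_top_of_le_ne_top h2 (Stmt8Aux.sharpV1_le (fun x y => f y x))
end

section
/- Let α, β ∈ (0,1) with α+β < 1. If f : [0,1)² → ℝ satisfies ∑_{j=1}^∞ v_s#(f;2^j) / 2^{j(1−(α+β))} < ∞ for s = 1,2, then f is continuous in {n^{1−(α+β)}}#-variation. -/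
open MeasureTheory Filter Set ENNReal

lemma vSharp1_le_succ (f : ℝ → ℝ → ℝ) (n : ℕ) : vSharp1 f n ≤ vSharp1 f (n + 1) := by
  rcases n with _ | m
  · refine iSup_le fun P => ?_
    simpa using zero_le _
  · refine iSup_le fun P => ?_
    have h0 := P.hab 0
    set mid : ℝ := (P.a 0 + P.b 0) / 2 with hmiddef
    have hmid1 : P.a 0 < mid := by simp only [hmiddef]; linarith
    have hmid2 : mid < P.b 0 := by simp only [hmiddef]; linarith
    set b' : Fin (m + 1) → ℝ := Function.update P.b 0 mid with hb'def
    have hb'le : ∀ j, b' j ≤ P.b j := by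
      intro j
      by_cases hj : j = 0
      · subst hj; simp [hb'def, hmid2.le]
      · simp [hb'def, Function.update_of_ne hj]
    have hsub1 : ∀ j, Ioo (P.a j) (b' j) ⊆ Ioo (P.a j) (P.b j) :=
      fun j => Ioo_subset_Ioo le_rfl (hb'le j)
    have hsub2 : Ioo mid (P.b 0) ⊆ Ioo (P.a 0) (P.b 0) := Ioo_subset_Ioo hmid1.le le_rfl
    let Q : SharpPack (m + 1 + 1) :=
    { a := Fin.snoc P.a mid
      b := Fin.snoc b' (P.b 0)
      y := Fin.snoc P.y (P.y 0)
      ha := by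
        refine Fin.lastCases ?_ ?_
        · simpa using le_of_lt (lt_of_le_of_lt (P.ha 0) hmid1)
        · intro j; simpa using P.ha j
      hab := by
        refine Fin.lastCases ?_ ?_
        · simpa using hmid2
        · intro j
          simp only [Fin.snoc_castSucc]
          by_cases hj : j = 0
          · subst hj; simpa [hb'def] using hmid1
          · simpa [hb'def, Function.update_of_ne hj] using P.hab j
      hb := by
        refine Fin.lastCases ?_ ?_
        · simpa using P.hb 0
        · intro j; simpa using le_trans (hb'le j) (P.hb j)
      hy := by
        refine Fin.lastCases ?_ ?_
        · simpa using P.hy 0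
        · intro j; simpa using P.hy j
      disj := by
        have dm : Disjoint (Ioo (P.a 0) mid) (Ioo mid (P.b 0)) :=
          Set.disjoint_left.2 fun x hx hx' => absurd hx.2 (not_lt.2 hx'.1.le)
        have hb'0 : b' 0 = mid := by simp [hb'def]
        refine Fin.lastCases ?_ ?_
        · refine Fin.lastCases ?_ ?_
          · intro h; exact absurd rfl h
          · intro j _
            simp only [Fin.snoc_castSucc, Fin.snoc_last]
            by_cases hj : j = 0
            · subst hj; rw [hb'0]; exact dm.symm
            · exact Set.disjoint_of_subset hsub2 (hsub1 j) ((P.disj 0 j (Ne.symm hj)))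
        · intro i
          refine Fin.lastCases ?_ ?_
          · intro _
            simp only [Fin.snoc_castSucc, Fin.snoc_last]
            by_cases hi : i = 0
            · subst hi; rw [hb'0]; exact dm
            · exact Set.disjoint_of_subset (hsub1 i) hsub2 (P.disj i 0 hi)
          · intro j hij
            have hij' : i ≠ j := fun h => hij (by rw [h])
            simp only [Fin.snoc_castSucc]
            exact Set.disjoint_of_subset (hsub1 i) (hsub1 j) (P.disj i j hij') }
    refine le_trans ?_ (le_iSup (fun P : SharpPack (m + 1 + 1) => ∑ i : Fin (m+1+1),
      ENNReal.ofReal |f (P.b i) (P.y i) - f (P.a i) (P.y i)|) Q)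
    have hRHS : ∑ i : Fin (m+1+1), ENNReal.ofReal |f (Q.b i) (Q.y i) - f (Q.a i) (Q.y i)|
        = (∑ j : Fin (m+1), ENNReal.ofReal |f (b' j) (P.y j) - f (P.a j) (P.y j)|) +
          ENNReal.ofReal |f (P.b 0) (P.y 0) - f mid (P.y 0)| := by
      rw [Fin.sum_univ_castSucc]
      congr 1
      · exact Finset.sum_congr rfl fun j _ => by simp [Q]
      · simp [Q]
    rw [hRHS, Fin.sum_univ_succ, Fin.sum_univ_succ
      (f := fun j : Fin (m+1) => ENNReal.ofReal |f (b' j) (P.y j) - f (P.a j) (P.y j)|)]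
    have hb'succ : ∀ i : Fin m, b' i.succ = P.b i.succ := fun i => by
      simp [hb'def, Function.update_of_ne (Fin.succ_ne_zero i)]
    rw [Finset.sum_congr rfl (fun i (_ : i ∈ Finset.univ) => by rw [hb'succ i] :
      ∀ i ∈ Finset.univ, ENNReal.ofReal |f (b' (Fin.succ i)) (P.y (Fin.succ i)) - f (P.a (Fin.succ i)) (P.y (Fin.succ i))| = ENNReal.ofReal |f (P.b (Fin.succ i)) (P.y (Fin.succ i)) - f (P.a (Fin.succ i)) (P.y (Fin.succ i))|)]
    have hb'0 : b' 0 = mid := by simp [hb'def]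
    rw [hb'0]
    have tri : ENNReal.ofReal |f (P.b 0) (P.y 0) - f (P.a 0) (P.y 0)| ≤
        ENNReal.ofReal |f mid (P.y 0) - f (P.a 0) (P.y 0)| +
        ENNReal.ofReal |f (P.b 0) (P.y 0) - f mid (P.y 0)| := by
      rw [← ENNReal.ofReal_add (abs_nonneg _) (abs_nonneg _)]
      apply ENNReal.ofReal_le_ofReal
      have h1 := abs_sub_le (f (P.b 0) (P.y 0)) (f mid (P.y 0)) (f (P.a 0) (P.y 0))
      have h2 : |f (P.b 0) (P.y 0) - f mid (P.y 0)| = |f (P.b 0) (P.y 0) - f mid (P.y 0)| := rfl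
      calc |f (P.b 0) (P.y 0) - f (P.a 0) (P.y 0)|
          ≤ |f (P.b 0) (P.y 0) - f mid (P.y 0)| + |f mid (P.y 0) - f (P.a 0) (P.y 0)| := h1
        _ = |f mid (P.y 0) - f (P.a 0) (P.y 0)| + |f (P.b 0) (P.y 0) - f mid (P.y 0)| := add_comm _ _
    calc ENNReal.ofReal |f (P.b 0) (P.y 0) - f (P.a 0) (P.y 0)| +
          ∑ i : Fin m, ENNReal.ofReal |f (P.b i.succ) (P.y i.succ) - f (P.a i.succ) (P.y i.succ)|
        ≤ (ENNReal.ofReal |f mid (P.y 0) - f (P.a 0) (P.y 0)| +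
            ENNReal.ofReal |f (P.b 0) (P.y 0) - f mid (P.y 0)|) +
          ∑ i : Fin m, ENNReal.ofReal |f (P.b i.succ) (P.y i.succ) - f (P.a i.succ) (P.y i.succ)| :=
          add_le_add_left tri _
      _ = ENNReal.ofReal |f mid (P.y 0) - f (P.a 0) (P.y 0)| +
          ∑ i : Fin m, ENNReal.ofReal |f (P.b i.succ) (P.y i.succ) - f (P.a i.succ) (P.y i.succ)| +
          ENNReal.ofReal |f (P.b 0) (P.y 0) - f mid (P.y 0)| := by ring

lemma vSharp1_mono (f : ℝ → ℝ → ℝ) : Monotone (vSharp1 f) :=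
  monotone_nat_of_le_succ (vSharp1_le_succ f)


lemma subpack_sum_le (f : ℝ → ℝ → ℝ) {n : ℕ} (P : SharpPack n) (s : Finset (Fin n)) :
    ∑ i ∈ s, ENNReal.ofReal |f (P.b i) (P.y i) - f (P.a i) (P.y i)| ≤ vSharp1 f s.card := by
  classical
  set e := s.orderIsoOfFin rfl with he
  let Q : SharpPack s.card :=
  { a := fun i => P.a (e i)
    b := fun i => P.b (e i)
    y := fun i => P.y (e i)
    ha := fun i => P.ha _
    hab := fun i => P.hab _
    hb := fun i => P.hb _
    hy := fun i => P.hy _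
    disj := fun i j hij => P.disj _ _ (by
      intro hval
      exact hij (e.injective (Subtype.ext hval))) }
  refine le_trans ?_ (le_iSup (fun Q : SharpPack s.card => ∑ i : Fin s.card,
    ENNReal.ofReal |f (Q.b i) (Q.y i) - f (Q.a i) (Q.y i)|) Q)
  apply le_of_eq
  rw [← Finset.sum_coe_sort s (fun i => ENNReal.ofReal |f (P.b i) (P.y i) - f (P.a i) (P.y i)|)]
  exact (Fintype.sum_equiv e.toEquiv _ _ (fun i => rfl)).symm


lemma sharpV1_le_tsum (δ : ℝ) (hδ0 : 0 < δ) (f : ℝ → ℝ → ℝ) (m : ℕ) :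
    sharpV1 (fun n => (n : ℝ) ^ δ) m f ≤
      ∑' j : ℕ, vSharp1 f (2 ^ (j + 1)) * (ENNReal.ofReal (((m + 2 ^ j : ℕ) : ℝ) ^ δ))⁻¹ := by
  refine iSup_le fun n => iSup_le fun P => ?_
  set F : Fin n → ℝ≥0∞ := fun i => ENNReal.ofReal |f (P.b i) (P.y i) - f (P.a i) (P.y i)|
    with hF
  set w : ℕ → ℝ≥0∞ := fun j => (ENNReal.ofReal (((m + 2 ^ j : ℕ) : ℝ) ^ δ))⁻¹ with hw
  set g : Fin n → ℕ := fun i => Nat.log 2 (i.1 + 1) with hg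
  have step1 : sharpSum (fun n => (n : ℝ) ^ δ) m f P ≤ ∑ i : Fin n, F i * w (g i) := by
    refine Finset.sum_le_sum fun i _ => ?_
    have hc : (0 : ℝ) < ((m + i.1 + 1 : ℕ) : ℝ) ^ δ := by
      apply Real.rpow_pos_of_pos
      positivity
    rw [ENNReal.ofReal_div_of_pos hc, div_eq_mul_inv]
    refine mul_le_mul_right ?_ _
    rw [ENNReal.inv_le_inv]
    apply ENNReal.ofReal_le_ofReal
    apply Real.rpow_le_rpow (by positivity) _ hδ0.le
    have h2 : 2 ^ g i ≤ i.1 + 1 := Nat.pow_log_le_self 2 (Nat.succ_ne_zero _)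
    have : (m + 2 ^ g i : ℕ) ≤ (m + i.1 + 1 : ℕ) := by omega
    exact_mod_cast this
  have step2 : ∑ i : Fin n, F i * w (g i) =
      ∑ j ∈ Finset.range n, ∑ i ∈ Finset.univ.filter (fun i => g i = j), F i * w (g i) := by
    refine (Finset.sum_fiberwise_of_maps_to ?_ _).symm
    intro i _
    have h1 : g i < i.1 + 1 := Nat.log_lt_self 2 (Nat.succ_ne_zero _)
    have := i.2
    exact Finset.mem_range.2 (by omega)
  have step3 : ∀ j, ∑ i ∈ Finset.univ.filter (fun i => g i = j), F i * w (g i) ≤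
      vSharp1 f (2 ^ (j + 1)) * w j := by
    intro j
    have he : ∑ i ∈ Finset.univ.filter (fun i => g i = j), F i * w (g i) =
        (∑ i ∈ Finset.univ.filter (fun i => g i = j), F i) * w j := by
      rw [Finset.sum_mul]
      exact Finset.sum_congr rfl fun i hi => by
        rw [(Finset.mem_filter.1 hi).2]
    rw [he]
    refine mul_le_mul_left ?_ _
    refine le_trans (subpack_sum_le f P _) (vSharp1_mono f ?_)
    refine le_trans (Finset.card_le_card_of_injOn (t := Finset.range (2 ^ (j + 1))) (fun i => i.1) ?_ ?_) ?_
    · exact fun x hx => Finset.mem_range.2 (by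
        have hlog : Nat.log 2 (x.1 + 1) = j := (Finset.mem_filter.1 hx).2
        have h2' := Nat.lt_pow_succ_log_self (by norm_num : 1 < 2) (x.1 + 1)
        rw [hlog] at h2'
        show x.1 < 2 ^ (j + 1)
        omega)
    · intro x _ y _ hxy
      exact Fin.ext hxy
    · simp
  calc sharpSum (fun n => (n : ℝ) ^ δ) m f P
      ≤ ∑ i : Fin n, F i * w (g i) := step1
    _ = ∑ j ∈ Finset.range n, ∑ i ∈ Finset.univ.filter (fun i => g i = j), F i * w (g i) := step2
    _ ≤ ∑ j ∈ Finset.range n, vSharp1 f (2 ^ (j + 1)) * w j :=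
        Finset.sum_le_sum fun j _ => step3 j
    _ ≤ ∑' j : ℕ, vSharp1 f (2 ^ (j + 1)) * w j := ENNReal.sum_le_tsum _


lemma ennreal_tsum_split (g : ℕ → ℝ≥0∞) (J : ℕ) :
    ∑' j, g j = (∑ j ∈ Finset.range J, g j) + ∑' k, g (k + J) := by
  classical
  set s : Set ℕ := {j : ℕ | J ≤ j} with hs
  let e : ℕ ≃ s :=
  { toFun := fun k => ⟨k + J, (le_add_self : J ≤ k + J)⟩
    invFun := fun j => j.1 - J
    left_inv := fun k => by simp
    right_inv := fun j => by
      ext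
      exact Nat.sub_add_cancel j.2 }
  have h1 : ∑' (x : s), g x = ∑' k, g (k + J) := by
    rw [← e.tsum_eq]
    exact tsum_congr fun c => rfl
  have h2 : ∑' (x : ↑sᶜ), g x = ∑ j ∈ Finset.range J, g j := by
    rw [tsum_subtype (sᶜ) g]
    rw [tsum_eq_sum (s := Finset.range J) (f := fun j => Set.indicator (sᶜ) g j) ?h0]
    · refine Finset.sum_congr rfl fun j hj => ?_
      have : j ∈ sᶜ := by
        simp only [hs, Set.mem_compl_iff, Set.mem_setOf_eq, not_le]
        exact Finset.mem_range.1 hj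
      exact Set.indicator_of_mem this g
    · intro b hb
      have : b ∈ s := by
        simp only [hs, Set.mem_setOf_eq]
        exact Nat.le_of_not_lt (fun h => hb (Finset.mem_range.2 h))
      exact Set.indicator_of_notMem (by simpa using this) g
  have h3 := Summable.tsum_add_tsum_compl (f := g) (s := s)
    ENNReal.summable ENNReal.summable
  rw [h1, h2] at h3
  rw [← h3, add_comm]

lemma tendsto_aux (a : ℕ → ℕ → ℝ≥0∞) (hanti : ∀ j, Antitone (fun m => a m j))
    (hfin : ∑' j, a 0 j ≠ ⊤) (hzero : ∀ j, Tendsto (fun m => a m j) atTop (nhds 0)) :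
    Tendsto (fun m => ∑' j, a m j) atTop (nhds 0) := by
  rw [ENNReal.tendsto_nhds_zero]
  intro ε hε
  have hε2 : (0 : ℝ≥0∞) < ε / 2 := ENNReal.half_pos hε.ne'
  have htail : Tendsto (fun J => ∑' k, a 0 (k + J)) atTop (nhds 0) :=
    ENNReal.tendsto_sum_nat_add _ hfin
  obtain ⟨J, hJ⟩ := (ENNReal.tendsto_nhds_zero.1 htail (ε / 2) hε2).exists
  have hfinpart : Tendsto (fun m => ∑ j ∈ Finset.range J, a m j) atTop (nhds 0) := by
    have := tendsto_finset_sum (Finset.range J) (fun j (_ : j ∈ Finset.range J) => hzero j)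
    simpa using this
  filter_upwards [ENNReal.tendsto_nhds_zero.1 hfinpart (ε / 2) hε2] with m hm
  have htail' : ∑' k, a m (k + J) ≤ ε / 2 :=
    le_trans (ENNReal.tsum_le_tsum fun k => hanti (k + J) (Nat.zero_le m)) hJ
  calc ∑' j, a m j = ∑ j ∈ Finset.range J, a m j + ∑' k, a m (k + J) :=
        ennreal_tsum_split _ J
    _ ≤ ε / 2 + ε / 2 := add_le_add hm htail'
    _ = ε := ENNReal.add_halves ε


lemma main1 (δ : ℝ) (hδ0 : 0 < δ) (hδ1 : δ ≤ 1) (f : ℝ → ℝ → ℝ)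
    (h1 : (∑' j : ℕ, vSharp1 f (2 ^ (j + 1)) *
      ENNReal.ofReal (1 / (2 : ℝ) ^ (((j : ℝ) + 1) * δ))) ≠ ⊤) :
    Tendsto (fun m => sharpV1 (fun n => (n : ℝ) ^ δ) m f) atTop (nhds 0) := by
  set a : ℕ → ℕ → ℝ≥0∞ := fun m j =>
    vSharp1 f (2 ^ (j + 1)) * (ENNReal.ofReal (((m + 2 ^ j : ℕ) : ℝ) ^ δ))⁻¹ with ha
  have hwposR : ∀ j : ℕ, (0 : ℝ) < 1 / (2 : ℝ) ^ (((j : ℝ) + 1) * δ) := by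
    intro j
    positivity
  have hweight : ∀ j : ℕ, (ENNReal.ofReal (((2 ^ j : ℕ) : ℝ) ^ δ))⁻¹ ≤
      2 * ENNReal.ofReal (1 / (2 : ℝ) ^ (((j : ℝ) + 1) * δ)) := by
    intro j
    have hA : (0 : ℝ) < ((2 ^ j : ℕ) : ℝ) ^ δ := by positivity
    rw [← ENNReal.ofReal_inv_of_pos hA]
    have h2' : ENNReal.ofReal (2 * (1 / (2 : ℝ) ^ (((j : ℝ) + 1) * δ))) =
        2 * ENNReal.ofReal (1 / (2 : ℝ) ^ (((j : ℝ) + 1) * δ)) := by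
      rw [ENNReal.ofReal_mul (by norm_num : (0:ℝ) ≤ 2)]
      norm_num
    rw [← h2']
    apply ENNReal.ofReal_le_ofReal
    have hcast : ((2 ^ j : ℕ) : ℝ) = (2 : ℝ) ^ (j : ℕ) := by push_cast; ring
    have hsplit : (2 : ℝ) ^ (((j : ℝ) + 1) * δ) = ((2 : ℝ) ^ (j : ℕ)) ^ δ * (2 : ℝ) ^ δ := by
      rw [Real.rpow_mul (by norm_num : (0:ℝ) ≤ 2)]
      rw [Real.rpow_add (by norm_num : (0:ℝ) < 2), Real.rpow_one]
      rw [Real.mul_rpow (by positivity) (by norm_num : (0:ℝ) ≤ 2)]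
      rw [Real.rpow_natCast]
    have h2δ : (2 : ℝ) ^ δ ≤ 2 := by
      calc (2 : ℝ) ^ δ ≤ (2 : ℝ) ^ (1 : ℝ) :=
            Real.rpow_le_rpow_of_exponent_le (by norm_num) hδ1
        _ = 2 := Real.rpow_one 2
    have h2δpos : (0 : ℝ) < (2 : ℝ) ^ δ := by positivity
    have hApos : (0 : ℝ) < ((2 : ℝ) ^ (j : ℕ)) ^ δ := by positivity
    rw [hcast, hsplit]
    rw [inv_eq_one_div, div_le_iff₀ hApos]
    have hh : 2 * (1 / ((2 ^ j : ℝ) ^ δ * 2 ^ δ)) * ((2 ^ j : ℝ)) ^ δ = 2 / 2 ^ δ := by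
      field_simp
    rw [hh, le_div_iff₀ h2δpos]
    linarith
  have hub : ∀ m, sharpV1 (fun n => (n : ℝ) ^ δ) m f ≤ ∑' j, a m j :=
    fun m => sharpV1_le_tsum δ hδ0 f m
  have hanti : ∀ j, Antitone (fun m => a m j) := by
    intro j m m' hmm'
    refine mul_le_mul_right ?_ _
    rw [ENNReal.inv_le_inv]
    apply ENNReal.ofReal_le_ofReal
    apply Real.rpow_le_rpow (by positivity) _ hδ0.le
    exact_mod_cast Nat.add_le_add_right hmm' _
  have hvne : ∀ j : ℕ, vSharp1 f (2 ^ (j + 1)) ≠ ⊤ := by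
    intro j htop
    apply h1
    have hterm := ENNReal.le_tsum (f := fun j : ℕ => vSharp1 f (2 ^ (j + 1)) *
      ENNReal.ofReal (1 / (2 : ℝ) ^ (((j : ℝ) + 1) * δ))) j
    rw [htop, ENNReal.top_mul (ENNReal.ofReal_pos.2 (hwposR j)).ne'] at hterm
    exact top_le_iff.1 hterm
  have hfin : ∑' j, a 0 j ≠ ⊤ := by
    have hle : ∀ j, a 0 j ≤ 2 * (vSharp1 f (2 ^ (j + 1)) *
        ENNReal.ofReal (1 / (2 : ℝ) ^ (((j : ℝ) + 1) * δ))) := by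
      intro j
      have h0 : ((0 + 2 ^ j : ℕ) : ℝ) = ((2 ^ j : ℕ) : ℝ) := by norm_num
      calc a 0 j = vSharp1 f (2 ^ (j + 1)) *
            (ENNReal.ofReal (((2 ^ j : ℕ) : ℝ) ^ δ))⁻¹ := by rw [ha]; simp only [h0]
        _ ≤ vSharp1 f (2 ^ (j + 1)) *
            (2 * ENNReal.ofReal (1 / (2 : ℝ) ^ (((j : ℝ) + 1) * δ))) :=
            mul_le_mul_right (hweight j) _
        _ = 2 * (vSharp1 f (2 ^ (j + 1)) *
            ENNReal.ofReal (1 / (2 : ℝ) ^ (((j : ℝ) + 1) * δ))) := by ring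
    refine ne_top_of_le_ne_top ?_ (ENNReal.tsum_le_tsum hle)
    rw [ENNReal.tsum_mul_left]
    exact ENNReal.mul_ne_top (by norm_num) h1
  have hzero : ∀ j, Tendsto (fun m => a m j) atTop (nhds 0) := by
    intro j
    have hnat : Tendsto (fun m : ℕ => ((m + 2 ^ j : ℕ) : ℝ)) atTop atTop :=
      tendsto_natCast_atTop_atTop.comp (tendsto_add_atTop_nat (2 ^ j))
    have hrpow : Tendsto (fun m : ℕ => ((m + 2 ^ j : ℕ) : ℝ) ^ δ) atTop atTop :=
      (tendsto_rpow_atTop hδ0).comp hnat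
    have htop : Tendsto (fun m : ℕ => ENNReal.ofReal (((m + 2 ^ j : ℕ) : ℝ) ^ δ))
        atTop (nhds ⊤) := ENNReal.tendsto_ofReal_atTop.comp hrpow
    have hinv := htop.inv
    rw [ENNReal.inv_top] at hinv
    have hfinal := ENNReal.Tendsto.const_mul (a := vSharp1 f (2 ^ (j + 1))) hinv
      (Or.inr (hvne j))
    rw [mul_zero] at hfinal
    exact hfinal
  exact tendsto_of_tendsto_of_tendsto_of_le_of_le tendsto_const_nhds
    (tendsto_aux a hanti hfin hzero) (fun m => zero_le) hub

/-- if `∑_j v_s^#(f;2^j) / 2^{j(1-(α+β))} < ∞` for `s = 1,2`, then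
`f ∈ C{n^{1-(α+β)}}^# V`. -/
theorem stmt9 (α β : ℝ) (hα : α ∈ Ioo (0 : ℝ) 1) (hβ : β ∈ Ioo (0 : ℝ) 1)
    (hαβ : α + β < 1) (f : ℝ → ℝ → ℝ)
    (h1 : (∑' j : ℕ, vSharp1 f (2 ^ (j + 1)) *
      ENNReal.ofReal (1 / (2 : ℝ) ^ (((j : ℝ) + 1) * (1 - (α + β))))) ≠ ⊤)
    (h2 : (∑' j : ℕ, vSharp2 f (2 ^ (j + 1)) *
      ENNReal.ofReal (1 / (2 : ℝ) ^ (((j : ℝ) + 1) * (1 - (α + β))))) ≠ ⊤) :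
    CSharpV (fun n => (n : ℝ) ^ (1 - (α + β))) f := by
  have hδ0 : 0 < 1 - (α + β) := by linarith
  have hδ1 : 1 - (α + β) ≤ 1 := by
    have := hα.1
    have := hβ.1
    linarith
  have t1 := main1 (1 - (α + β)) hδ0 hδ1 f h1
  have t2 := main1 (1 - (α + β)) hδ0 hδ1 (fun x y => f y x) h2
  simpa [CSharpV, sharpV, sharpV2] using t1.add t2
end
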